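/- arXiv:2003.08914 — 7 statements merged into one kernel-verified Lean document; each statement's English description precedes it below -/
import Mathlib

section
/- For every real number s > 1 and every integer D, the Dirichlet L-series ζ_D(s) = ∑_{m odd, m ≥ 1} (D/m) m^{-s} satisfies ζ_D(s) ≥ (1 + 2^{-s}) ζ(2s)/ζ(s). -/
/-- The Riemann zeta function for real `s > 1`, as a series. -/
noncomputable def zeta (s : ℝ) : ℝ := ∑' m : ℕ, (m : ℝ) ^ (-s)

/-- The Dirichlet series `ζ_D(s) = ∑_{m odd} (D/m) m^{-s}` with `(D/m)` the Jacobi symbol. -/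
noncomputable def zetaD (D : ℤ) (s : ℝ) : ℝ :=
  ∑' m : ℕ, if Odd m then (jacobiSym D m : ℝ) * (m : ℝ) ^ (-s) else 0

/-- comparison of infinite products of nonnegative reals -/
lemma hasProd_le_real {ι : Type*} {f g : ι → ℝ} {a b : ℝ} (h0 : ∀ i, 0 ≤ f i)
    (h : ∀ i, f i ≤ g i) (hf : HasProd f a) (hg : HasProd g b) : a ≤ b :=
  le_of_tendsto_of_tendsto' hf hg fun s =>
    Finset.prod_le_prod (fun i _ => h0 i) (fun i _ => h i)

/-- the completely multiplicative function `m ↦ χ_D(m) m^{-s}` -/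
noncomputable def chiF (D : ℤ) (s : ℝ) : ℕ →*₀ ℝ where
  toFun m := (if Odd m then (jacobiSym D m : ℝ) else 0) * (m : ℝ) ^ (-s)
  map_zero' := by simp [Nat.odd_iff]
  map_one' := by simp
  map_mul' m n := by
    by_cases hm : Odd m
    · by_cases hn : Odd n
      · haveI : NeZero m := ⟨hm.pos.ne'⟩
        haveI : NeZero n := ⟨hn.pos.ne'⟩
        rw [if_pos hm, if_pos hn, if_pos (hm.mul hn), jacobiSym.mul_right, Nat.cast_mul,
          Real.mul_rpow (Nat.cast_nonneg m) (Nat.cast_nonneg n)]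
        push_cast
        ring
      · rw [if_neg fun h => hn (Nat.odd_mul.mp h).2, if_neg hn]
        ring
    · rw [if_neg fun h => hm (Nat.odd_mul.mp h).1, if_neg hm]
      ring

/-- the completely multiplicative function `m ↦ m^{-t}` -/
noncomputable def zF (t : ℝ) (ht : t ≠ 0) : ℕ →*₀ ℝ where
  toFun m := (m : ℝ) ^ (-t)
  map_zero' := by
    rw [Nat.cast_zero, Real.zero_rpow (neg_ne_zero.mpr ht)]
  map_one' := by simp
  map_mul' m n := by
    rw [Nat.cast_mul, Real.mul_rpow (Nat.cast_nonneg m) (Nat.cast_nonneg n)]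

@[simp] lemma zF_apply (t : ℝ) (ht : t ≠ 0) (m : ℕ) : zF t ht m = (m : ℝ) ^ (-t) := rfl

@[simp] lemma chiF_apply (D : ℤ) (s : ℝ) (m : ℕ) :
    chiF D s m = (if Odd m then (jacobiSym D m : ℝ) else 0) * (m : ℝ) ^ (-s) := rfl

lemma summable_rpow_neg {t : ℝ} (ht : 1 < t) :
    Summable (fun m : ℕ => (m : ℝ) ^ (-t)) :=
  Real.summable_nat_rpow.mpr (by linarith)

lemma zeta_hasProd {t : ℝ} (ht : 1 < t) :
    HasProd (fun p : Nat.Primes => (1 - ((p : ℕ) : ℝ) ^ (-t))⁻¹) (zeta t) := by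
  have h0 : t ≠ 0 := by linarith
  have hsum : Summable (fun m => ‖zF t h0 m‖) := by
    refine (summable_rpow_neg ht).congr fun m => ?_
    rw [zF_apply, Real.norm_eq_abs, abs_of_nonneg (Real.rpow_nonneg (Nat.cast_nonneg m) _)]
  have H := EulerProduct.eulerProduct_completely_multiplicative_hasProd hsum
  have h1 : ∑' n, zF t h0 n = zeta t := tsum_congr fun n => zF_apply t h0 n
  rw [h1] at H
  simpa only [zF_apply] using H

lemma jacobi_abs_le (D : ℤ) (m : ℕ) : |((jacobiSym D m : ℤ) : ℝ)| ≤ 1 := by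
  rcases jacobiSym.trichotomy D m with h | h | h <;> rw [h] <;> norm_num

lemma zetaD_hasProd (D : ℤ) {s : ℝ} (hs : 1 < s) :
    HasProd (fun p : Nat.Primes => (1 - chiF D s p)⁻¹) (zetaD D s) := by
  have hsum : Summable (fun m => ‖chiF D s m‖) := by
    refine Summable.of_nonneg_of_le (fun m => norm_nonneg _) (fun m => ?_)
      (summable_rpow_neg hs)
    rw [chiF_apply, Real.norm_eq_abs, abs_mul, abs_of_nonneg (Real.rpow_nonneg (Nat.cast_nonneg m) _)]
    have h1 : |if Odd m then ((jacobiSym D m : ℤ) : ℝ) else 0| ≤ 1 := by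
      split
      · exact jacobi_abs_le D m
      · simp
    calc |if Odd m then ((jacobiSym D m : ℤ) : ℝ) else 0| * (m : ℝ) ^ (-s)
        ≤ 1 * (m : ℝ) ^ (-s) :=
          mul_le_mul_of_nonneg_right h1 (Real.rpow_nonneg (Nat.cast_nonneg m) _)
      _ = (m : ℝ) ^ (-s) := one_mul _
  have := EulerProduct.eulerProduct_completely_multiplicative_hasProd hsum
  have heq : ∑' n, chiF D s n = zetaD D s := by
    unfold zetaD
    refine tsum_congr fun m => ?_
    rw [chiF_apply]
    split <;> simp
  rwa [heq] at this

theorem stmt1 (s : ℝ) (hs : 1 < s) (D : ℤ) :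
    (1 + 2 ^ (-s)) * (zeta (2 * s) / zeta s) ≤ zetaD D s := by
  have hs2 : 1 < 2 * s := by linarith
  -- positivity facts about x = p^{-s}
  have hx0 : ∀ p : Nat.Primes, 0 < ((p : ℕ) : ℝ) ^ (-s) := fun p =>
    Real.rpow_pos_of_pos (by exact_mod_cast p.prop.pos) _
  have hx1 : ∀ p : Nat.Primes, ((p : ℕ) : ℝ) ^ (-s) < 1 := fun p =>
    Real.rpow_lt_one_of_one_lt_of_neg (by exact_mod_cast p.prop.one_lt) (by linarith)
  have hsq : ∀ p : Nat.Primes, ((p : ℕ) : ℝ) ^ (-(2 * s)) = (((p : ℕ) : ℝ) ^ (-s)) ^ 2 := by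
    intro p
    rw [← Real.rpow_natCast (((p : ℕ) : ℝ) ^ (-s)) 2, ← Real.rpow_mul (Nat.cast_nonneg _)]
    norm_num
    ring_nf
  -- the four Euler products
  have hZ2 := zeta_hasProd hs2
  have hZ := zeta_hasProd hs
  have hD := zetaD_hasProd D hs
  set p2 : Nat.Primes := ⟨2, Nat.prime_two⟩ with hp2
  have htwo : HasProd (fun p : Nat.Primes => if p = p2 then (1 + (2 : ℝ) ^ (-s)) else 1)
      (1 + (2 : ℝ) ^ (-s)) := by
    have := hasProd_single (f := fun p : Nat.Primes =>
      if p = p2 then (1 + (2 : ℝ) ^ (-s)) else 1) p2 (fun b hb => if_neg hb)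
    simpa using this
  have hlhs := hZ2.mul htwo
  have hrhs := hD.mul hZ
  -- termwise comparison
  have key : zeta (2 * s) * (1 + 2 ^ (-s)) ≤ zetaD D s * zeta s := by
    refine hasProd_le_real (fun p => ?_) (fun p => ?_) hlhs hrhs
    · have h2 : (0:ℝ) < 1 - ((p : ℕ) : ℝ) ^ (-(2 * s)) := by
        rw [hsq p]; nlinarith [hx0 p, hx1 p]
      have : (0:ℝ) ≤ if p = p2 then (1 + (2 : ℝ) ^ (-s)) else 1 := by
        split
        · positivity
        · norm_num
      positivity
    · -- main inequality
      set x := ((p : ℕ) : ℝ) ^ (-s) with hxdef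
      have hx0' := hx0 p
      have hx1' := hx1 p
      set c : ℝ := if Odd (p : ℕ) then ((jacobiSym D (p : ℕ) : ℤ) : ℝ) else 0 with hc
      have hchi : chiF D s (p : ℕ) = c * x := rfl
      have hcabs : |c| ≤ 1 := by
        rw [hc]; split
        · exact jacobi_abs_le D _
        · simp
      have hcl : -1 ≤ c := neg_le_of_abs_le hcabs
      have hcu : c ≤ 1 := le_of_abs_le hcabs
      have hcx : c * x ≤ x := by nlinarith
      have hpos1 : (0:ℝ) < 1 - c * x := by nlinarith
      have hpos2 : (0:ℝ) < 1 - x := by linarith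
      rw [hchi, hsq p, ← hxdef]
      by_cases hp : p = p2
      · -- p = 2 : equality
        have hodd : ¬ Odd (p : ℕ) := by rw [hp]; decide
        have hc0 : c = 0 := if_neg hodd
        have h2x : (2 : ℝ) ^ (-s) = x := by
          rw [hxdef, hp]; norm_num
        rw [if_pos hp, hc0, h2x, zero_mul, sub_zero, inv_one, one_mul]
        have hfact : 1 - x ^ 2 = (1 - x) * (1 + x) := by ring
        have hx1p : (0:ℝ) < 1 + x := by linarith
        rw [hfact, mul_inv, mul_assoc, inv_mul_cancel₀ (ne_of_gt hx1p), mul_one]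
      · rw [if_neg hp, mul_one]
        have hineq : (1 - c * x) * (1 - x) ≤ 1 - x ^ 2 := by
          nlinarith [mul_nonneg (mul_nonneg hpos2.le hx0'.le) (by linarith : (0:ℝ) ≤ 1 + c)]
        calc (1 - x ^ 2)⁻¹ ≤ ((1 - c * x) * (1 - x))⁻¹ := by
              apply inv_anti₀ (by positivity) hineq
          _ = (1 - c * x)⁻¹ * (1 - x)⁻¹ := mul_inv _ _
  -- conclude
  have hz1 : (1:ℝ) ≤ zeta s := by
    have := Summable.le_tsum (summable_rpow_neg hs) 1
      (fun j _ => Real.rpow_nonneg (Nat.cast_nonneg j) _)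
    simpa [zeta] using this
  have hzpos : 0 < zeta s := by linarith
  rw [mul_div_assoc', div_le_iff₀ hzpos]
  nlinarith [key]
end

section
/- Let e be a nonzero integer with e ≡ 0 or 1 (mod 4) and let ψ_e(m) be the Kronecker symbol (e/m). Then the L-series L(ψ_e, 1) = ∑_{m=1}^∞ ψ_e(m)/m satisfies L(ψ_e, 1) ≤ 2 + log|e|. -/
/-- The Kronecker symbol `(e/2)`. -/
def kronTwo (e : ℤ) : ℤ :=
  if e % 2 = 0 then 0 else if e % 8 = 1 ∨ e % 8 = 7 then 1 else -1

/-- The Kronecker symbol `(e/m)`, defined multiplicatively from the Jacobi symbol on the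
odd part of `m` and `(e/2)` on the `2`-part of `m`. -/
def kron (e : ℤ) (m : ℕ) : ℤ :=
  kronTwo e ^ (m.factorization 2) * jacobiSym e (m / 2 ^ (m.factorization 2))

open Finset

section KronLemmas

lemma kronTwo_eq {e : ℤ} (h4 : e % 4 = 1) : kronTwo e = jacobiSym 2 e.natAbs := by
  have hu : Odd e.natAbs := by rw [Nat.odd_iff]; omega
  rw [jacobiSym.at_two hu, ZMod.χ₈_nat_eq_if_mod_eight, kronTwo,
    if_neg (by omega : ¬ e % 2 = 0), if_neg (by omega : ¬ e.natAbs % 2 = 0)]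
  by_cases h : e % 8 = 1
  · rw [if_pos (by omega : e % 8 = 1 ∨ e % 8 = 7),
      if_pos (by omega : e.natAbs % 8 = 1 ∨ e.natAbs % 8 = 7)]
  · rw [if_neg (by omega : ¬ (e % 8 = 1 ∨ e % 8 = 7)),
      if_neg (by omega : ¬ (e.natAbs % 8 = 1 ∨ e.natAbs % 8 = 7))]

lemma jacobi_flip {e : ℤ} (h4 : e % 4 = 1) {n : ℕ} (hn : Odd n) :
    jacobiSym e n = jacobiSym n e.natAbs := by
  rcases Int.natAbs_eq e with h | h
  · have h41 : e.natAbs % 4 = 1 := by omega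
    conv_lhs => rw [h]
    exact jacobiSym.quadratic_reciprocity_one_mod_four h41 hn
  · have h43 : e.natAbs % 4 = 3 := by omega
    have hu : Odd e.natAbs := by rw [Nat.odd_iff]; omega
    conv_lhs => rw [h, neg_eq_neg_one_mul]
    rw [jacobiSym.mul_left, jacobiSym.at_neg_one hn]
    rcases Nat.odd_mod_four_iff.mp (Nat.odd_iff.mp hn) with h1 | h3
    · rw [ZMod.χ₄_nat_one_mod_four h1,
        jacobiSym.quadratic_reciprocity_one_mod_four' hu h1, one_mul]
    · rw [ZMod.χ₄_nat_three_mod_four h3,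
        jacobiSym.quadratic_reciprocity_three_mod_four h43 h3]
      ring

lemma kron_eq_jacobi {e : ℤ} (h4 : e % 4 = 1) {m : ℕ} (hm : m ≠ 0) :
    kron e m = jacobiSym m e.natAbs := by
  have hodd : Odd (m / 2 ^ m.factorization 2) := by
    have := Nat.not_dvd_ordCompl Nat.prime_two hm
    rw [Nat.odd_iff]
    omega
  rw [kron, kronTwo_eq h4, jacobi_flip h4 hodd, ← jacobiSym.pow_left, ← jacobiSym.mul_left]
  congr 1
  conv_rhs => rw [← Nat.ordProj_mul_ordCompl_eq_self m 2]
  push_cast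
  ring

lemma kron_even_zero {e : ℤ} (h2 : e % 2 = 0) {m : ℕ} (hm2 : m % 2 = 0) (hm : m ≠ 0) :
    kron e m = 0 := by
  have hv : m.factorization 2 ≠ 0 := by
    have := (Nat.Prime.factorization_pos_of_dvd Nat.prime_two hm
      (Nat.dvd_of_mod_eq_zero hm2))
    omega
  rw [kron, kronTwo, if_pos h2, zero_pow hv, zero_mul]

lemma kron_odd_eq (e : ℤ) {m : ℕ} (hm2 : m % 2 = 1) : kron e m = jacobiSym e m := by
  have h : m.factorization 2 = 0 := Nat.factorization_eq_zero_of_not_dvd (by omega)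
  rw [kron, h, pow_zero, pow_zero, one_mul, Nat.div_one]

lemma jacobi_periodic_four {e : ℤ} (h4 : e % 4 = 0) {m : ℕ} (hm2 : m % 2 = 1) :
    jacobiSym e (m + e.natAbs) = jacobiSym e m := by
  obtain ⟨d, rfl⟩ : ∃ d, e = 4 * d := ⟨e / 4, by omega⟩
  have key : ∀ n : ℕ, n % 2 = 1 → jacobiSym (4 * d) n = jacobiSym d n := by
    intro n hn
    have hg : Int.gcd 2 (n : ℕ) = 1 := by
      rw [show (2:ℤ) = ((2:ℕ):ℤ) by norm_num, Int.gcd_natCast_natCast]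
      exact Nat.coprime_two_left.mpr (Nat.odd_iff.mpr hn)
    rw [(by norm_num : (4 : ℤ) * d = 2 ^ 2 * d), jacobiSym.mul_left,
      jacobiSym.sq_one' hg, one_mul]
  have hq2 : (4 * d).natAbs % 2 = 0 := by omega
  have hmq : (m + (4 * d).natAbs) % 2 = 1 := by omega
  rw [key _ hmq, key _ hm2,
    jacobiSym.mod_right d (Nat.odd_iff.mpr hmq), jacobiSym.mod_right d (Nat.odd_iff.mpr hm2)]
  congr 1
  have h : (4 * d).natAbs = 4 * d.natAbs := by omega
  rw [h, Nat.add_mod_right]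

lemma kron_abs_le (e : ℤ) (m : ℕ) : |kron e m| ≤ 1 := by
  rw [kron, abs_mul, abs_pow]
  have h1 : |kronTwo e| ≤ 1 := by unfold kronTwo; split_ifs <;> simp
  have h2 : |jacobiSym e (m / 2 ^ m.factorization 2)| ≤ 1 := by
    rcases jacobiSym.trichotomy e (m / 2 ^ m.factorization 2) with h | h | h <;>
      rw [h] <;> norm_num
  calc |kronTwo e| ^ m.factorization 2 * |jacobiSym e (m / 2 ^ m.factorization 2)|
      ≤ 1 * 1 := by
        refine mul_le_mul ?_ h2 (abs_nonneg _) zero_le_one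
        exact pow_le_one₀ (abs_nonneg _) h1
    _ = 1 := one_mul 1

lemma kron_periodic {e : ℤ} (he : e ≠ 0) (h4 : e % 4 = 0 ∨ e % 4 = 1) {m : ℕ} (hm : m ≠ 0) :
    kron e (m + e.natAbs) = kron e m := by
  rcases h4 with h4 | h4
  · rcases Nat.even_or_odd m with hm2 | hm2
    · rw [Nat.even_iff] at hm2
      have hq2 : e.natAbs % 2 = 0 := by omega
      rw [kron_even_zero (by omega) hm2 hm, kron_even_zero (by omega) (by omega) (by omega)]
    · rw [Nat.odd_iff] at hm2
      rw [kron_odd_eq e hm2, kron_odd_eq e (by omega : (m + e.natAbs) % 2 = 1),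
        jacobi_periodic_four h4 hm2]
  · rw [kron_eq_jacobi h4 hm, kron_eq_jacobi h4 (by omega : m + e.natAbs ≠ 0)]
    exact jacobiSym.mod_left' (by push_cast; exact Int.add_emod_right _ _)

end KronLemmas

section AnalyticLemmas

lemma sum_periodic_block {ψ : ℕ → ℝ} {q : ℕ} (hper : ∀ m, 1 ≤ m → ψ (m + q) = ψ m) (N : ℕ) :
    ∑ i ∈ range (N + q), ψ (i+1) = (∑ i ∈ range N, ψ (i+1)) + ∑ i ∈ range q, ψ (i+1) := by
  induction N with
  | zero => simp
  | succ n ih =>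
    have h : n + 1 + q = (n + q) + 1 := by ring
    rw [h, sum_range_succ, ih, sum_range_succ]
    have h2 : n + q + 1 = (n + 1) + q := by ring
    rw [h2, hper (n+1) (by omega)]
    ring

lemma sum_periodic_mul {ψ : ℕ → ℝ} {q : ℕ} (hper : ∀ m, 1 ≤ m → ψ (m + q) = ψ m)
    (r k : ℕ) :
    ∑ i ∈ range (r + k * q), ψ (i+1)
      = (∑ i ∈ range r, ψ (i+1)) + k * ∑ i ∈ range q, ψ (i+1) := by
  induction k with
  | zero => simp
  | succ n ih =>
    have h : r + (n + 1) * q = (r + n * q) + q := by ring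
    rw [h, sum_periodic_block hper, ih]
    push_cast
    ring

lemma abel_identity (ψ : ℕ → ℝ) (N : ℕ) :
    ∑ i ∈ range N, ψ (i+1)
      = N * (∑ i ∈ range N, ψ (i+1) / (i+1))
        - ∑ m ∈ range N, ∑ i ∈ range m, ψ (i+1) / (i+1) := by
  induction N with
  | zero => simp
  | succ n ih =>
    rw [sum_range_succ, ih, sum_range_succ (fun m => ∑ i ∈ range m, ψ (i+1) / (i+1)),
      sum_range_succ (fun i => ψ (i+1) / (i+1))]
    have hn : ((n : ℝ) + 1) ≠ 0 := by positivity
    push_cast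
    field_simp
    ring

lemma S_bound {ψ : ℕ → ℝ} (habs : ∀ m, |ψ m| ≤ 1) {q : ℕ} (hq : 0 < q)
    (hper : ∀ m, 1 ≤ m → ψ (m + q) = ψ m) (hSq : ∑ i ∈ range q, ψ (i+1) = 0) (N : ℕ) :
    |∑ i ∈ range N, ψ (i+1)| ≤ q / 2 := by
  have hred : ∑ i ∈ range N, ψ (i+1) = ∑ i ∈ range (N % q), ψ (i+1) := by
    conv_lhs => rw [show N = N % q + (N / q) * q by rw [Nat.mod_add_div']]
    rw [sum_periodic_mul hper, hSq]
    ring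
  rw [hred]
  set r := N % q with hr
  have hrq : r < q := Nat.mod_lt _ hq
  have h1 : |∑ i ∈ range r, ψ (i+1)| ≤ r := by
    calc |∑ i ∈ range r, ψ (i+1)| ≤ ∑ i ∈ range r, |ψ (i+1)| := abs_sum_le_sum_abs _ _
      _ ≤ ∑ _i ∈ range r, (1:ℝ) := sum_le_sum (fun i _ => habs (i+1))
      _ = r := by simp
  have h2 : |∑ i ∈ range r, ψ (i+1)| ≤ q - r := by
    have hsplit : ∑ i ∈ range q, ψ (i+1)
        = (∑ i ∈ range r, ψ (i+1)) + ∑ i ∈ Ico r q, ψ (i+1) := by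
      simp only [range_eq_Ico]
      exact (Finset.sum_Ico_consecutive _ (Nat.zero_le r) hrq.le).symm
    have h3 : ∑ i ∈ range r, ψ (i+1) = - ∑ i ∈ Ico r q, ψ (i+1) := by
      rw [hSq] at hsplit; linarith
    rw [h3, abs_neg]
    calc |∑ i ∈ Ico r q, ψ (i+1)| ≤ ∑ i ∈ Ico r q, |ψ (i+1)| := abs_sum_le_sum_abs _ _
      _ ≤ ∑ _i ∈ Ico r q, (1:ℝ) := sum_le_sum (fun i _ => habs (i+1))
      _ = ((q - r : ℕ) : ℝ) := by rw [sum_const, Nat.card_Ico]; simp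
      _ = (q : ℝ) - r := by push_cast [hrq.le]; ring
  linarith

lemma tail_bound {ψ : ℕ → ℝ} {q : ℕ} (hq : 0 < q)
    (hS : ∀ N, |∑ i ∈ range N, ψ (i+1)| ≤ q / 2)
    (hSq : ∑ i ∈ range q, ψ (i+1) = 0) :
    ∀ N, q ≤ N →
      (∑ i ∈ range N, ψ (i+1) / (i+1)) ≤ (∑ i ∈ range q, ψ (i+1) / (i+1)) + 1/2 := by
  set T : ℕ → ℝ := fun N => ∑ i ∈ range N, ψ (i+1) / (i+1) with hT
  set S : ℕ → ℝ := fun N => ∑ i ∈ range N, ψ (i+1) with hSdef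
  have key : ∀ N, q ≤ N →
      |(T N - S N / (N + 1)) - T q| ≤ (q / 2) * (1 / (q + 1) - 1 / (N + 1)) := by
    intro N hN
    induction N, hN using Nat.le_induction with
    | base => simp [hSq, hSdef, T]
    | succ n hn ih =>
      push_cast
      have hTn : T (n+1) = T n + ψ (n+1) / (n+1) := sum_range_succ _ n
      have hSn : S (n+1) = S n + ψ (n+1) := sum_range_succ _ n
      have hstep : (T (n+1) - S (n+1) / (n+1+1)) - (T n - S n / (n+1))
          = S (n+1) * (1 / (n+1) - 1 / (n+1+1)) := by
        rw [hTn, hSn]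
        have h1 : ((n:ℝ) + 1) ≠ 0 := by positivity
        have h2 : ((n:ℝ) + 1 + 1) ≠ 0 := by positivity
        push_cast
        field_simp
        ring
      have hmono : (1:ℝ) / (n+1) - 1 / (n+1+1) ≥ 0 := by
        have h2 : (0:ℝ) < (n:ℝ) + 1 := by positivity
        have h3 : ((n:ℝ) + 1) ≤ (n:ℝ) + 1 + 1 := by linarith
        have := one_div_le_one_div_of_le h2 h3
        linarith
      calc |(T (n+1) - S (n+1) / (n+1+1)) - T q|
          = |((T n - S n / (n+1)) - T q) + S (n+1) * (1 / (n+1) - 1 / (n+1+1))| := by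
            rw [show ((T (n+1) - S (n+1) / (n+1+1)) - T q)
              = ((T n - S n / (n+1)) - T q)
                + ((T (n+1) - S (n+1) / (n+1+1)) - (T n - S n / (n+1))) by ring, hstep]
        _ ≤ |(T n - S n / (n+1)) - T q| + |S (n+1)| * (1 / (n+1) - 1 / (n+1+1)) := by
            refine (abs_add_le _ _).trans ?_
            rw [abs_mul, abs_of_nonneg hmono]
        _ ≤ (q / 2) * (1 / (q + 1) - 1 / (n + 1)) + (q / 2) * (1 / (n+1) - 1 / (n+1+1)) := by
            have := hS (n+1)
            gcongr
        _ = (q / 2) * (1 / (q + 1) - 1 / ((n:ℝ)+1+1)) := by ring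
  intro N hN
  have h := key N hN
  have h1 : (0:ℝ) < (N:ℝ) + 1 := by positivity
  have h3 : T N - S N / (N+1) - T q ≤ (q / 2) * (1 / (q + 1) - 1 / (N + 1)) :=
    (abs_le.mp h).2
  have h4 : S N / (N + 1) ≤ (q/2) / (N+1) := by
    gcongr
    exact (abs_le.mp (hS N)).2
  have hq1 : (0:ℝ) < (q:ℝ) + 1 := by positivity
  have h5 : ((q:ℝ)/2) / ((q:ℝ)+1) ≤ 1/2 := by
    rw [div_le_iff₀ hq1]
    ring_nf
    nlinarith [Nat.cast_nonneg (α := ℝ) q]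
  have e1 : ((q:ℝ)/2)*(1/((q:ℝ)+1)) = ((q:ℝ)/2)/((q:ℝ)+1) := by ring
  have e2 : ((q:ℝ)/2)*(1/((N:ℝ)+1)) = ((q:ℝ)/2)/((N:ℝ)+1) := by ring
  linarith

end AnalyticLemmas

theorem stmt2 (e : ℤ) (he : e ≠ 0) (h4 : e % 4 = 0 ∨ e % 4 = 1)
    (hconv : e < 0 ∨ ¬ IsSquare e) (L : ℝ)
    (hL : Filter.Tendsto (fun N : ℕ => ∑ m ∈ Finset.range N, (kron e (m + 1) : ℝ) / (m + 1))
      Filter.atTop (nhds L)) :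
    L ≤ 2 + Real.log |(e : ℝ)| := by
  set q : ℕ := e.natAbs with hqdef
  have hq0 : 0 < q := Int.natAbs_pos.mpr he
  let ψ : ℕ → ℝ := fun m => ((kron e m : ℤ) : ℝ)
  have hper : ∀ m, 1 ≤ m → ψ (m + q) = ψ m := by
    intro m hm
    show ((kron e (m + q) : ℤ) : ℝ) = ((kron e m : ℤ) : ℝ)
    exact_mod_cast congrArg (fun z : ℤ => (z : ℝ)) (kron_periodic he h4 (by omega))
  have habs : ∀ m, |ψ m| ≤ 1 := by
    intro m
    show |((kron e m : ℤ) : ℝ)| ≤ 1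
    exact_mod_cast kron_abs_le e m
  -- identify hL's function with T
  have hLT : Filter.Tendsto (fun N : ℕ => ∑ i ∈ range N, ψ (i+1) / (i+1))
      Filter.atTop (nhds L) := hL
  -- Kronecker's lemma: S N / N → 0
  have hC := hLT.cesaro
  have hzero : Filter.Tendsto (fun n : ℕ => (∑ i ∈ range n, ψ (i+1)) / n)
      Filter.atTop (nhds 0) := by
    have hsub := hLT.sub hC
    rw [sub_self] at hsub
    refine hsub.congr' ?_
    filter_upwards [Filter.eventually_ge_atTop 1] with n hn
    have hn0 : ((n:ℝ)) ≠ 0 := by positivity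
    rw [abel_identity ψ n]
    field_simp
  -- conclude the period sum vanishes
  have hSq : ∑ i ∈ range q, ψ (i+1) = 0 := by
    have hmono : Filter.Tendsto (fun k : ℕ => (k+1) * q) Filter.atTop Filter.atTop := by
      apply Filter.tendsto_atTop_mono (f := id) ?_ Filter.tendsto_id
      intro k
      simp only [id]
      calc k ≤ (k+1) * 1 := by omega
        _ ≤ (k+1) * q := by exact Nat.mul_le_mul_left _ hq0
    have hcomp := hzero.comp hmono
    have hval : (fun k : ℕ => (∑ i ∈ range ((k+1)*q), ψ (i+1)) / (((k+1)*q : ℕ) : ℝ))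
        = fun _ : ℕ => (∑ i ∈ range q, ψ (i+1)) / q := by
      funext k
      rw [show (k+1)*q = 0 + (k+1)*q by omega, sum_periodic_mul hper 0 (k+1)]
      have hk : ((k:ℝ) + 1) ≠ 0 := by positivity
      have hqr : ((q:ℝ)) ≠ 0 := by positivity
      push_cast
      rw [sum_range_zero, zero_add]
      field_simp
      ring
    have hconst : Filter.Tendsto (fun _ : ℕ => (∑ i ∈ range q, ψ (i+1)) / (q:ℝ))
        Filter.atTop (nhds 0) := by
      rw [← hval]
      exact hcomp
    have hqr : ((q:ℝ)) ≠ 0 := by positivity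
    have h0 : (∑ i ∈ range q, ψ (i+1)) / (q:ℝ) = 0 :=
      tendsto_nhds_unique tendsto_const_nhds hconst
    rcases div_eq_zero_iff.mp h0 with h | h
    · exact h
    · exact absurd h hqr
  have hSb := S_bound habs hq0 hper hSq
  have htail := tail_bound hq0 hSb hSq
  have hLle : L ≤ (∑ i ∈ range q, ψ (i+1) / (i+1)) + 1/2 := by
    refine le_of_tendsto hLT ?_
    filter_upwards [Filter.eventually_ge_atTop q] with N hN
    exact htail N hN
  have hTq : (∑ i ∈ range q, ψ (i+1) / (i+1)) ≤ (harmonic q : ℝ) := by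
    have hh : (harmonic q : ℝ) = ∑ i ∈ range q, 1 / ((i:ℝ)+1) := by
      rw [harmonic]
      push_cast
      simp [one_div]
    rw [hh]
    refine sum_le_sum ?_
    intro i _
    have h1 : (0:ℝ) < (i:ℝ) + 1 := by positivity
    have h2 := (abs_le.mp (habs (i+1))).2
    gcongr
  have hqlog := harmonic_le_one_add_log q
  have habse : |(e:ℝ)| = (q:ℝ) := by
    rw [hqdef, Nat.cast_natAbs, Int.cast_abs]
  rw [habse]
  linarith
end

section
/- Let L and L' be positive definite integral lattices (finitely generated free ℤ-modules with positive definite integral symmetric bilinear form). If the orthogonal direct sums [1] ⊕ L and [1] ⊕ L' are isomorphic as lattices, then L and L' are isomorphic as lattices. (Here [1] denotes the rank-1 lattice with Gram matrix (1).) -/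
private lemma aux_cancel {M N : Type*} [AddCommGroup M] [AddCommGroup N]
    (B : M →ₗ[ℤ] M →ₗ[ℤ] ℤ) (C : N →ₗ[ℤ] N →ₗ[ℤ] ℤ)
    (e' : (ℤ × M) ≃ₗ[ℤ] ℤ × N)
    (he' : ∀ p q : ℤ × M, p.1 * q.1 + B p.2 q.2 = (e' p).1 * (e' q).1 + C (e' p).2 (e' q).2)
    (h1 : e' (1, 0) = (1, 0)) :
    ∃ f : M ≃ₗ[ℤ] N, ∀ x y : M, C (f x) (f y) = B x y := by
  have hz : ∀ x : M, (e' (0, x)).1 = 0 := by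
    intro x
    have h := he' (1, 0) (0, x)
    simp [h1] at h
    linarith
  have hz' : ∀ y : N, (e'.symm (0, y)).1 = 0 := by
    intro y
    have h := he' (1, 0) (e'.symm (0, y))
    simp [h1] at h
    linarith
  set f : M →ₗ[ℤ] N := (LinearMap.snd ℤ ℤ N).comp (e'.toLinearMap.comp (LinearMap.inr ℤ ℤ M)) with hf
  set g : N →ₗ[ℤ] M := (LinearMap.snd ℤ ℤ M).comp (e'.symm.toLinearMap.comp (LinearMap.inr ℤ ℤ N)) with hg
  have hfd : ∀ x : M, f x = (e' (0, x)).2 := fun x => rfl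
  have hgd : ∀ y : N, g y = (e'.symm (0, y)).2 := fun y => rfl
  have hfx : ∀ x : M, e' (0, x) = (0, f x) := by
    intro x; exact Prod.ext (hz x) (hfd x).symm
  have hgy : ∀ y : N, e'.symm (0, y) = (0, g y) := by
    intro y; exact Prod.ext (hz' y) (hgd y).symm
  have hgf : ∀ x : M, g (f x) = x := by
    intro x
    have h2 : e'.symm (0, f x) = (0, x) := by rw [← hfx x]; exact e'.symm_apply_apply _
    have := congrArg Prod.snd ((hgy (f x)).symm.trans h2)
    simpa using this
  have hfg : ∀ y : N, f (g y) = y := by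
    intro y
    have h2 : e' (0, g y) = (0, y) := by rw [← hgy y]; exact e'.apply_symm_apply _
    have := congrArg Prod.snd ((hfx (g y)).symm.trans h2)
    simpa using this
  refine ⟨LinearEquiv.ofLinear f g (by ext y; simp [hfg]) (by ext x; simp [hgf]), ?_⟩
  intro x y
  have h := he' (0, x) (0, y)
  simp only [hfx] at h
  simpa using h.symm

section ReflAux
variable {N : Type*} [AddCommGroup N]

private noncomputable def reflMap (C : N →ₗ[ℤ] N →ₗ[ℤ] ℤ) (n : N) : (ℤ × N) →ₗ[ℤ] ℤ × N :=
  LinearMap.id - ((LinearMap.fst ℤ ℤ N) - (C.flip n).comp (LinearMap.snd ℤ ℤ N)).smulRight ((1 : ℤ), -n)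

private lemma reflMap_apply (C : N →ₗ[ℤ] N →ₗ[ℤ] ℤ) (n : N) (p : ℤ × N) :
    reflMap C n p = (p.1 - (p.1 - C p.2 n), p.2 + (p.1 - C p.2 n) • n) := by
  simp [reflMap, Prod.smul_def, sub_eq_add_neg, Prod.ext_iff]

private lemma reflMap_invol (C : N →ₗ[ℤ] N →ₗ[ℤ] ℤ) (n : N) (hn : C n n = 1) :
    Function.Involutive (reflMap C n) := by
  intro p
  simp only [reflMap_apply]
  have h : C (p.2 + (p.1 - C p.2 n) • n) n = C p.2 n + (p.1 - C p.2 n) := by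
    simp [map_add, map_smul, hn]
  rw [h]
  ext
  · simp
  · simp only []
    have h2 : (p.1 - (p.1 - C p.2 n) - (C p.2 n + (p.1 - C p.2 n))) = -(p.1 - C p.2 n) := by ring
    rw [h2, neg_smul]
    abel

private lemma reflMap_isometry (C : N →ₗ[ℤ] N →ₗ[ℤ] ℤ) (n : N) (hn : C n n = 1)
    (hCs : ∀ x y, C x y = C y x) (p q : ℤ × N) :
    (reflMap C n p).1 * (reflMap C n q).1 + C (reflMap C n p).2 (reflMap C n q).2
      = p.1 * q.1 + C p.2 q.2 := by
  simp only [reflMap_apply, map_add, map_smul, LinearMap.add_apply, LinearMap.smul_apply,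
    smul_eq_mul]
  rw [hn, hCs n q.2]
  ring
end ReflAux

/-- Cancellation of a unimodular rank-one summand `[1]` for positive definite integral
lattices: if `[1] ⊕ L ≅ [1] ⊕ L'` then `L ≅ L'`. -/
theorem stmt4 {M N : Type*} [AddCommGroup M] [Module.Free ℤ M] [Module.Finite ℤ M]
    [AddCommGroup N] [Module.Free ℤ N] [Module.Finite ℤ N]
    (B : M →ₗ[ℤ] M →ₗ[ℤ] ℤ) (C : N →ₗ[ℤ] N →ₗ[ℤ] ℤ)
    (hBs : ∀ x y, B x y = B y x) (hCs : ∀ x y, C x y = C y x)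
    (hBpos : ∀ x : M, x ≠ 0 → 0 < B x x) (hCpos : ∀ x : N, x ≠ 0 → 0 < C x x)
    (e : (ℤ × M) ≃ₗ[ℤ] ℤ × N)
    (he : ∀ p q : ℤ × M, p.1 * q.1 + B p.2 q.2 = (e p).1 * (e q).1 + C (e p).2 (e q).2) :
    ∃ f : M ≃ₗ[ℤ] N, ∀ x y : M, C (f x) (f y) = B x y := by
  set a : ℤ := (e (1, 0)).1 with haa
  set n : N := (e (1, 0)).2 with hnn
  have ha : a * a + C n n = 1 := by
    have h := he (1, 0) (1, 0)
    simpa using h.symm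
  rcases eq_or_ne n 0 with hn0 | hn0
  · have ha1 : a * a = 1 := by
      rw [hn0] at ha; simpa using ha
    rcases mul_self_eq_one_iff.mp ha1 with h1 | h1
    · exact aux_cancel B C e he (Prod.ext h1 hn0)
    · let g : (ℤ × N) ≃ₗ[ℤ] ℤ × N := (LinearEquiv.neg ℤ).prodCongr (LinearEquiv.refl ℤ N)
      have hg : ∀ p : ℤ × N, g p = (-p.1, p.2) := fun p => rfl
      refine aux_cancel B C (e.trans g) ?_ ?_
      · intro p q
        rw [he p q]
        simp only [LinearEquiv.trans_apply, hg]
        ring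
      · show g (e (1, 0)) = (1, 0)
        have : e (1, 0) = (-1, 0) := Prod.ext h1 hn0
        rw [this, hg]
        norm_num
  · have hp := hCpos n hn0
    have ha0 : a = 0 := by nlinarith [mul_self_nonneg a]
    have hCn1 : C n n = 1 := by nlinarith
    let σ : (ℤ × N) ≃ₗ[ℤ] ℤ × N :=
      LinearEquiv.ofInvolutive (reflMap C n) (reflMap_invol C n hCn1)
    have hσ : ∀ p : ℤ × N, σ p = reflMap C n p := fun p => rfl
    refine aux_cancel B C (e.trans σ) ?_ ?_
    · intro p q
      rw [he p q]
      simp only [LinearEquiv.trans_apply, hσ]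
      rw [reflMap_isometry C n hCn1 hCs]
    · show σ (e (1, 0)) = (1, 0)
      have h10 : e (1, 0) = (0, n) := Prod.ext ha0 rfl
      rw [h10, hσ, reflMap_apply]
      simp [hCn1]
end

section
/- Let q: A → ℚ/2ℤ be a finite quadratic form on a finite abelian group A (i.e., q(na) = n²q(a) and (a,b) ↦ (q(a+b) − q(a) − q(b))/2 is ℚ/ℤ-bilinear). Then the 2-length ℓ₂(A) (the minimal number of generators of the 2-primary part of A) is congruent modulo 2 to the signature of q modulo 8, in the sense that if q is the discriminant form of an even lattice of signature (s₊, s₋), then ℓ₂(A) ≡ s₊ − s₋ (mod 2). -/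
/-- The 2-length of a finite abelian group: the minimal number of generators of its
Sylow 2-subgroup, computed as the 𝔽₂-dimension of the 2-torsion subgroup. -/
noncomputable def ell2 (G : Type*) [AddCommGroup G] : ℕ :=
  (Nat.card {x : G // x + x = 0}).factorization 2


open Module LinearMap

theorem alt_parity (K : Type) [Field K] (N : ℕ) :
    ∀ (V : Type) [AddCommGroup V] [Module K V] [FiniteDimensional K V]
      (B : LinearMap.BilinForm K V), B.IsAlt → Module.finrank K V = N →
      Even (N + Module.finrank K (LinearMap.ker B)) := by
  induction N using Nat.strong_induction_on with
  | _ N ih =>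
  intro V _ _ _ B hAlt hrank
  by_cases hB0 : B = 0
  · subst hB0
    rw [LinearMap.ker_zero, finrank_top, hrank]
    exact ⟨N, rfl⟩
  · have : ∃ u v, B u v ≠ 0 := by
      by_contra h
      push_neg at h
      exact hB0 (by ext u v; simp [h])
    obtain ⟨u, v, hc⟩ := this
    set c := B u v with hcdef
    set f : V →ₗ[K] K × K := (B u).prod (B v) with hf
    set W := LinearMap.ker f with hW
    have hvu : B v u = -c := by
      rw [← LinearMap.IsAlt.neg hAlt u v, hcdef]
    have hfsurj : LinearMap.range f = ⊤ := by
      rw [eq_top_iff]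
      rintro ⟨a, b⟩ -
      refine ⟨a • (c⁻¹ • v) + b • ((-c)⁻¹ • u), ?_⟩
      have h1 : f (a • (c⁻¹ • v) + b • ((-c)⁻¹ • u))
          = a • (c⁻¹ • f v) + b • ((-c)⁻¹ • f u) := by
        simp only [map_add, map_smul]
      have hfv : f v = (c, 0) := by
        simp [hf, LinearMap.prod_apply, hAlt v, Prod.ext_iff, hcdef]
      have hfu : f u = (0, -c) := by
        simp [hf, LinearMap.prod_apply, hAlt u, hvu, Prod.ext_iff]
      rw [h1, hfv, hfu]
      simp [Prod.ext_iff, smul_eq_mul]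
      constructor
      · field_simp
      · field_simp
    have hrn : 2 + finrank K W = N := by
      have := LinearMap.finrank_range_add_finrank_ker f
      rw [hfsurj, finrank_top, hrank] at this
      simpa [Module.finrank_prod] using this
    set B' := B.restrict W with hB'
    have hAlt' : B'.IsAlt := fun x => hAlt x
    have hmemW : ∀ x : V, x ∈ W ↔ B u x = 0 ∧ B v x = 0 := by
      intro x
      simp [hW, hf, LinearMap.mem_ker, LinearMap.prod_apply, Prod.ext_iff]
    have hker : (LinearMap.ker B').map W.subtype = LinearMap.ker B := by
      apply le_antisymm
      · rintro _ ⟨⟨x, hxW⟩, hx, rfl⟩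
        simp only [LinearMap.mem_ker, Submodule.coe_subtype] at hx ⊢
        ext y
        show B x y = 0
        have hy : y - (B u y • (c⁻¹ • v) + B v y • ((-c)⁻¹ • u)) ∈ W := by
          rw [hmemW]
          constructor
          · simp only [map_sub, map_add, map_smul, hAlt u, hvu, smul_eq_mul]
            field_simp
            rw [← hcdef]; ring
          · simp only [map_sub, map_add, map_smul, hAlt v, hvu, smul_eq_mul]
            field_simp
            ring
        have hxu : B x u = 0 := by
          rw [← LinearMap.IsAlt.neg hAlt u x, ((hmemW x).mp hxW).1, neg_zero]
        have hxv : B x v = 0 := by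
          rw [← LinearMap.IsAlt.neg hAlt v x, ((hmemW x).mp hxW).2, neg_zero]
        have hBxw : B x (y - (B u y • (c⁻¹ • v) + B v y • ((-c)⁻¹ • u))) = 0 := by
          have h2 := congrFun (congrArg DFunLike.coe hx) ⟨_, hy⟩
          simpa [hB', LinearMap.BilinForm.restrict_apply] using h2
        have h3 : B x y = B x (y - (B u y • (c⁻¹ • v) + B v y • ((-c)⁻¹ • u)))
            + B u y • c⁻¹ • B x v + B v y • (-c)⁻¹ • B x u := by
          simp only [map_sub, map_add, map_smul, smul_eq_mul]
          ring
        rw [h3, hBxw, hxu, hxv]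
        simp
      · intro x hx
        simp only [LinearMap.mem_ker] at hx
        have hxW : x ∈ W := by
          rw [hmemW]
          constructor
          · rw [← LinearMap.IsAlt.neg hAlt x u, hx]; simp
          · rw [← LinearMap.IsAlt.neg hAlt x v, hx]; simp
        refine ⟨⟨x, hxW⟩, ?_, rfl⟩
        ext w
        show B x w = 0
        rw [hx]
        simp
    have hkerrank : finrank K (LinearMap.ker B) = finrank K (LinearMap.ker B') := by
      rw [← hker, Submodule.finrank_map_subtype_eq]
    have hlt : finrank K W < N := by omega
    obtain ⟨m, hm⟩ := ih (finrank K W) hlt W B' hAlt' rfl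
    exact ⟨m + 1, by omega⟩

open Module LinearMap Matrix

theorem matrix_alt_parity (n : ℕ) (M : Matrix (Fin n) (Fin n) (ZMod 2))
    (hsymm : M.IsSymm) (hdiag : ∀ i, M i i = 0) :
    Even (n + Module.finrank (ZMod 2) (LinearMap.ker (Matrix.toLin' M))) := by
  set B : LinearMap.BilinForm (ZMod 2) (Fin n → ZMod 2) :=
    Matrix.toLinearMap₂' (ZMod 2) M with hB
  have hBapp : ∀ x y, B x y = dotProduct x (M *ᵥ y) := fun x y =>
    Matrix.toLinearMap₂'_apply' M x y
  have hAlt : B.IsAlt := by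
    intro x
    rw [hB, Matrix.toLinearMap₂'_apply, ← Finset.sum_product']
    apply Finset.sum_involution (fun p _ => (p.2, p.1))
    · intro p _
      have hsym' : M p.2 p.1 = M p.1 p.2 := hsymm.apply p.1 p.2
      simp only [hsym', smul_eq_mul]
      ring_nf
      rw [show (2 : ZMod 2) = 0 from rfl, mul_zero]
    · intro p _ h he
      apply h
      have h1 : p.2 = p.1 := congrArg Prod.fst he
      simp [h1, hdiag, smul_eq_mul]
    · intro p _; simp
    · intro p _; rfl
  have hker : LinearMap.ker B = LinearMap.ker (Matrix.toLin' M) := by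
    have key : ∀ x, (Mᵀ *ᵥ x) = (M *ᵥ x) := by
      intro x; rw [hsymm]
    ext x
    simp only [LinearMap.mem_ker, Matrix.toLin'_apply]
    constructor
    · intro h
      funext j
      have h2 := congrFun (congrArg DFunLike.coe h) (Pi.single j 1)
      rw [hBapp] at h2
      simp only [LinearMap.zero_apply] at h2
      rw [Matrix.mulVec_single] at h2
      replace h2 : dotProduct x (fun i => M i j * 1) = 0 := h2
      have h3 : dotProduct x (fun i => M i j * 1) = (Mᵀ *ᵥ x) j := by
        simp [Matrix.mulVec, dotProduct, Matrix.transpose_apply, mul_comm]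
      rw [h3, key] at h2
      exact h2.trans (by simp)
    · intro h
      refine LinearMap.ext fun y => ?_
      rw [show (B x) y = dotProduct x (M *ᵥ y) from hBapp x y,
        dotProduct_mulVec, ← Matrix.mulVec_transpose, key, h]
      simp
  have hfr : Module.finrank (ZMod 2) (Fin n → ZMod 2) = n := by simp
  have := alt_parity (ZMod 2) n (Fin n → ZMod 2) B hAlt hfr
  rwa [hker] at this



theorem card_two_torsion (n : ℕ) (G : Matrix (Fin n) (Fin n) ℤ) (hdet : G.det ≠ 0) :
    Nat.card {x : (Fin n → ℤ) ⧸ LinearMap.range (Matrix.toLin' G) // x + x = 0}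
      = Nat.card (LinearMap.ker (Matrix.toLin' (G.map (fun z : ℤ => (z : ZMod 2))))) := by
  set M := G.map (fun z : ℤ => (z : ZMod 2)) with hM
  set R := LinearMap.range (Matrix.toLin' G) with hR
  set red : (Fin n → ℤ) → (Fin n → ZMod 2) := fun x i => ((x i : ℤ) : ZMod 2) with hredDef
  have hred_mulVec : ∀ y : Fin n → ℤ, red (G *ᵥ y) = M *ᵥ red y := by
    intro y
    funext i
    simp only [hredDef, hM, Matrix.mulVec, dotProduct, Matrix.map_apply]
    push_cast
    rfl
  have hGinj : ∀ y : Fin n → ℤ, G *ᵥ y = 0 → y = 0 := by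
    intro y hy
    have h1 : (G.adjugate * G) *ᵥ y = G.det • y := by
      rw [Matrix.adjugate_mul, Matrix.smul_mulVec, Matrix.one_mulVec]
    have h2 : (G.adjugate * G) *ᵥ y = 0 := by
      rw [← Matrix.mulVec_mulVec, hy, Matrix.mulVec_zero]
    rw [h2] at h1
    funext i
    have := congrFun h1.symm i
    simp only [Pi.smul_apply, smul_eq_mul, Pi.zero_apply] at this ⊢
    rcases mul_eq_zero.mp this with h | h
    · exact absurd h hdet
    · exact h
  -- lift of an element of the kernel
  set yv : (LinearMap.ker (Matrix.toLin' M)) → (Fin n → ℤ) :=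
    fun v i => (((v : Fin n → ZMod 2) i).val : ℤ) with hyv
  have hredy : ∀ v, red (yv v) = (v : Fin n → ZMod 2) := by
    intro v
    funext i
    simp only [hredDef, hyv, Int.cast_natCast]
    exact ZMod.natCast_rightInverse _
  have hdvd : ∀ v i, (2 : ℤ) ∣ (G *ᵥ yv v) i := by
    intro v i
    have h1 : red (G *ᵥ yv v) = 0 := by
      rw [hred_mulVec, hredy]
      have := v.2
      rwa [LinearMap.mem_ker, Matrix.toLin'_apply] at this
    have h2 := congrFun h1 i
    simp only [hredDef, Pi.zero_apply] at h2
    exact_mod_cast (ZMod.intCast_zmod_eq_zero_iff_dvd _ 2).mp h2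
  set xv : (LinearMap.ker (Matrix.toLin' M)) → (Fin n → ℤ) :=
    fun v i => (G *ᵥ yv v) i / 2 with hxv
  have hx2 : ∀ v i, 2 * xv v i = (G *ᵥ yv v) i := fun v i =>
    Int.mul_ediv_cancel' (hdvd v i)
  have hxx : ∀ v, xv v + xv v = G *ᵥ yv v := by
    intro v
    funext i
    have := hx2 v i
    simp only [Pi.add_apply]
    omega
  set F : (LinearMap.ker (Matrix.toLin' M)) →
      {x : (Fin n → ℤ) ⧸ R // x + x = 0} :=
    fun v => ⟨Submodule.Quotient.mk (xv v), by
      rw [← Submodule.Quotient.mk_add, hxx v, Submodule.Quotient.mk_eq_zero]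
      exact ⟨yv v, Matrix.toLin'_apply G (yv v)⟩⟩ with hF
  have hFinj : Function.Injective F := by
    intro v w hvw
    have h1 : Submodule.Quotient.mk (p := R) (xv v) = Submodule.Quotient.mk (xv w) := by
      simpa [hF, Subtype.ext_iff] using hvw
    rw [Submodule.Quotient.eq] at h1
    obtain ⟨z, hz⟩ := h1
    rw [Matrix.toLin'_apply] at hz
    have h2 : G *ᵥ (yv v - yv w - (2:ℤ) • z) = 0 := by
      have e1 : G *ᵥ (yv v - yv w - (2:ℤ) • z)
          = G *ᵥ yv v - G *ᵥ yv w - (2:ℤ) • (G *ᵥ z) := by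
        rw [Matrix.mulVec_sub, Matrix.mulVec_sub, Matrix.mulVec_smul]
      rw [e1, hz]
      funext i
      have h3 := hx2 v i
      have h4 := hx2 w i
      simp only [Pi.sub_apply, Pi.smul_apply, Pi.zero_apply, smul_eq_mul]
      omega
    have h5 := hGinj _ h2
    have h6 : yv v - yv w = (2:ℤ) • z := by
      rwa [sub_eq_zero] at h5
    have h7 : red (yv v) = red (yv w) := by
      funext i
      have h8 : yv v i = yv w i + 2 * z i := by
        have := congrFun h6 i
        simp only [Pi.sub_apply, Pi.smul_apply, smul_eq_mul] at this
        omega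
      simp only [hredDef, h8]
      push_cast
      rw [show (2 : ZMod 2) = 0 from rfl]
      ring
    ext1
    rw [← hredy v, ← hredy w, h7]
  have hFsurj : Function.Surjective F := by
    rintro ⟨t, ht⟩
    obtain ⟨x0, hx0⟩ := Submodule.Quotient.mk_surjective R t
    have hmem : x0 + x0 ∈ R := by
      rw [← Submodule.Quotient.mk_eq_zero, Submodule.Quotient.mk_add, hx0]
      exact ht
    obtain ⟨y0, hy0⟩ := hmem
    rw [Matrix.toLin'_apply] at hy0
    have hv0 : red y0 ∈ LinearMap.ker (Matrix.toLin' M) := by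
      rw [LinearMap.mem_ker, Matrix.toLin'_apply, ← hred_mulVec, hy0]
      funext i
      simp only [hredDef, Pi.add_apply, Pi.zero_apply]
      push_cast
      rw [← two_mul, show (2 : ZMod 2) = 0 from rfl, zero_mul]
    set v0 : LinearMap.ker (Matrix.toLin' M) := ⟨red y0, hv0⟩ with hv0def
    refine ⟨v0, ?_⟩
    have hyd : ∀ i, (2:ℤ) ∣ (yv v0 i - y0 i) := by
      intro i
      have h9 : red (yv v0) = red y0 := hredy v0
      have h10 := congrFun h9 i
      simp only [hredDef] at h10
      have : (((yv v0 i - y0 i : ℤ)) : ZMod 2) = 0 := by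
        push_cast
        rw [h10]; ring
      exact_mod_cast (ZMod.intCast_zmod_eq_zero_iff_dvd _ 2).mp this
    set z : Fin n → ℤ := fun i => (yv v0 i - y0 i) / 2 with hzdef
    have hz2 : ∀ i, 2 * z i = yv v0 i - y0 i := fun i =>
      Int.mul_ediv_cancel' (hyd i)
    have hclaim : G *ᵥ z = xv v0 - x0 := by
      have e0 : (2:ℤ) • z = yv v0 - y0 := by
        funext i
        have := hz2 i
        simp only [Pi.smul_apply, Pi.sub_apply, smul_eq_mul]
        omega
      have e1 : G *ᵥ ((2:ℤ) • z) = G *ᵥ (yv v0 - y0) := by rw [e0]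
      rw [Matrix.mulVec_smul, Matrix.mulVec_sub, hy0] at e1
      funext i
      have e2 := congrFun e1 i
      have e3 := hx2 v0 i
      simp only [Pi.smul_apply, Pi.sub_apply, Pi.add_apply, smul_eq_mul] at e2 e3 ⊢
      omega
    ext1
    show Submodule.Quotient.mk (xv v0) = t
    rw [← hx0, Submodule.Quotient.eq]
    exact ⟨z, by rw [Matrix.toLin'_apply]; exact hclaim⟩
  exact Nat.card_congr (Equiv.ofBijective F ⟨hFinj, hFsurj⟩).symm

/-- For an even nondegenerate integral lattice of signature `(sp, sm)` (given by a Gram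
matrix `G` that diagonalizes over `ℝ` with `sp` positive and `sm` negative entries),
the 2-length of the discriminant group `L^∨/L ≅ ℤⁿ/Gℤⁿ` is congruent to `sp - sm` mod 2. -/
theorem stmt7 (n sp sm : ℕ) (G : Matrix (Fin n) (Fin n) ℤ)
    (hsymm : G.IsSymm)
    (heven : ∀ x : Fin n → ℤ, 2 ∣ dotProduct x (G.mulVec x))
    (hdet : G.det ≠ 0)
    (P : Matrix (Fin n) (Fin n) ℝ) (hP : IsUnit P.det) (d : Fin n → ℝ)
    (hdiag : P.transpose * (G.map fun z : ℤ => (z : ℝ)) * P = Matrix.diagonal d)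
    (hpos : Nat.card {i // 0 < d i} = sp) (hneg : Nat.card {i // d i < 0} = sm) :
    Int.ModEq 2 (ell2 ((Fin n → ℤ) ⧸ LinearMap.range (Matrix.toLin' G)) : ℤ)
      ((sp : ℤ) - (sm : ℤ)) := by
  classical
  -- reduced matrix mod 2
  set M := G.map (fun z : ℤ => (z : ZMod 2)) with hM
  have hMsymm : M.IsSymm := hsymm.map _
  have hGdiag : ∀ i, (2:ℤ) ∣ G i i := by
    intro i
    have := heven (Pi.single i 1)
    rw [Matrix.mulVec_single, single_dotProduct, one_mul] at this
    simpa using this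
  have hMdiag : ∀ i, M i i = 0 := by
    intro i
    rw [hM, Matrix.map_apply]
    exact_mod_cast (ZMod.intCast_zmod_eq_zero_iff_dvd _ 2).mpr (hGdiag i)
  set k := Module.finrank (ZMod 2) (LinearMap.ker (Matrix.toLin' M)) with hk
  have hEven : Even (n + k) := matrix_alt_parity n M hMsymm hMdiag
  -- ell2 computation
  have hcard : Nat.card {x : (Fin n → ℤ) ⧸ LinearMap.range (Matrix.toLin' G) // x + x = 0}
      = Nat.card (LinearMap.ker (Matrix.toLin' M)) := card_two_torsion n G hdet
  haveI : Fintype (LinearMap.ker (Matrix.toLin' M)) := Fintype.ofFinite _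
  have hcard2 : Nat.card (LinearMap.ker (Matrix.toLin' M)) = 2 ^ k := by
    rw [Nat.card_eq_fintype_card, card_eq_pow_finrank (K := ZMod 2), ZMod.card]
  have hell : ell2 ((Fin n → ℤ) ⧸ LinearMap.range (Matrix.toLin' G)) = k := by
    rw [ell2, hcard, hcard2, Nat.Prime.factorization_pow Nat.prime_two,
      Finsupp.single_eq_same]
  -- signature count
  have hd : ∀ i, d i ≠ 0 := by
    have hdd : (Matrix.diagonal d).det ≠ 0 := by
      rw [← hdiag]
      have hGR : (G.map fun z : ℤ => (z : ℝ)).det = (G.det : ℝ) := by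
        rw [show (G.map fun z : ℤ => (z : ℝ)) = (Int.castRingHom ℝ).mapMatrix G from rfl,
          ← RingHom.map_det]
        rfl
      simp only [Matrix.det_mul, Matrix.det_transpose, hGR]
      have h1 : P.det ≠ 0 := hP.ne_zero
      have h2 : (G.det : ℝ) ≠ 0 := Int.cast_ne_zero.mpr hdet
      positivity
    rw [Matrix.det_diagonal] at hdd
    intro i
    exact Finset.prod_ne_zero_iff.mp hdd i (Finset.mem_univ i)
  have hsum : sp + sm = n := by
    rw [← hpos, ← hneg]
    rw [Nat.card_eq_fintype_card, Nat.card_eq_fintype_card]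
    have he : Fintype.card {i // d i < 0} = Fintype.card {i // ¬ 0 < d i} := by
      apply Fintype.card_congr
      apply Equiv.subtypeEquivRight
      intro i
      constructor
      · intro h; exact not_lt.mpr h.le
      · intro h; exact lt_of_le_of_ne (not_lt.mp h) (hd i)
    rw [he, Fintype.card_subtype_compl]
    have := Fintype.card_subtype_le (fun i : Fin n => 0 < d i)
    simp only [Fintype.card_fin] at this ⊢
    omega
  -- conclude
  rw [hell]
  obtain ⟨m, hm⟩ := hEven
  show (k : ℤ) % 2 = ((sp : ℤ) - (sm : ℤ)) % 2
  omega
end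

section
/- Let q be a nondegenerate finite quadratic form on a finite abelian group G. Let H = { α ∈ G : 2α = 0 } be the 2-torsion subgroup. Then there exists a subgroup H' ⊆ H of length ℓ₂(q) − 1 (i.e., an elementary abelian 2-group of rank ℓ₂(G) − 1, assuming ℓ₂(G) ≥ 1) such that the restriction q|H' takes values in 2ℤ/2ℤ ⊂ ℚ/2ℤ, i.e., q|H' is even. -/
private lemma two_tors_int' {z : AddCircle (2 : ℚ)} (h : z + z = 0) :
    ∃ m : ℤ, z = ((m : ℚ) : AddCircle (2 : ℚ)) := by
  induction z using QuotientAddGroup.induction_on with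
  | H r =>
    have h2 : ((r + r : ℚ) : AddCircle (2 : ℚ)) = 0 := h
    rw [AddCircle.coe_eq_zero_iff] at h2
    obtain ⟨n, hn⟩ := h2
    refine ⟨n, ?_⟩
    have hr : r = (n : ℚ) := by
      have : (n : ℚ) * 2 = r + r := by simpa [zsmul_eq_mul] using hn
      linarith
    rw [hr]

private lemma four_tors_half' {z : AddCircle (2 : ℚ)} (h : z + z + z + z = 0) :
    ∃ m : ℤ, z = (((m : ℚ) / 2 : ℚ) : AddCircle (2 : ℚ)) := by
  induction z using QuotientAddGroup.induction_on with
  | H r =>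
    have h2 : ((r + r + r + r : ℚ) : AddCircle (2 : ℚ)) = 0 := h
    rw [AddCircle.coe_eq_zero_iff] at h2
    obtain ⟨n, hn⟩ := h2
    refine ⟨n, ?_⟩
    have hr : r = (n : ℚ) / 2 := by
      have : (n : ℚ) * 2 = r + r + r + r := by simpa [zsmul_eq_mul] using hn
      linarith
    rw [hr]

private lemma zmod2cases (c : ZMod 2) : c = 0 ∨ c = 1 := by revert c; decide

/-- Any nondegenerate finite quadratic form `q : G → ℚ/2ℤ` contains a 2-elementary
subgroup `H'` of length `ℓ₂(q) - 1` on which `q` takes only even values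
(values in `ℤ/2ℤ ⊂ ℚ/2ℤ`). -/
theorem stmt8 {G : Type*} [AddCommGroup G] [Finite G]
    (q : G → AddCircle (2 : ℚ))
    (hq : ∀ (n : ℤ) (a : G), q (n • a) = (n ^ 2 : ℤ) • q a)
    (hpolar : ∀ a b c : G,
      q (a + b + c) - q (a + b) - q (a + c) - q (b + c) + q a + q b + q c = 0)
    (hnd : ∀ a : G, (∀ b : G, q (a + b) - q a - q b = 0) → a = 0)
    (hl : 1 ≤ ell2 G) :
    ∃ H' : AddSubgroup G, (∀ x ∈ H', x + x = 0) ∧ ell2 ↥H' = ell2 G - 1 ∧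
      ∀ x ∈ H', ∃ m : ℤ, q x = ((m : ℚ) : AddCircle (2 : ℚ)) := by
  classical
  have hq0 : q 0 = 0 := by simpa using hq 0 0
  -- additivity of the polar form
  have key : ∀ a b c : G, q (a + b + c) - q (a + b) - q c
      = (q (a + c) - q a - q c) + (q (b + c) - q b - q c) := by
    intro a b c
    refine eq_of_sub_eq_zero ?_
    calc q (a + b + c) - q (a + b) - q c
          - ((q (a + c) - q a - q c) + (q (b + c) - q b - q c))
        = q (a + b + c) - q (a + b) - q (a + c) - q (b + c) + q a + q b + q c := by abel
      _ = 0 := hpolar a b c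
  -- the polar form is integral on 2-torsion elements
  have hB : ∀ x y : G, x + x = 0 →
      ∃ m : ℤ, q (x + y) - q x - q y = ((m : ℚ) : AddCircle (2 : ℚ)) := by
    intro x y hx
    apply two_tors_int'
    have h := (key x x y).symm
    rw [hx, zero_add, hq0, sub_zero, sub_self] at h
    exact h
  -- `q` takes half-integer values on 2-torsion elements
  have hhalf : ∀ x : G, x + x = 0 →
      ∃ m : ℤ, q x = (((m : ℚ) / 2 : ℚ) : AddCircle (2 : ℚ)) := by
    intro x hx
    apply four_tors_half'
    have h2 : (2 : ℤ) • x = 0 := by rw [two_zsmul, hx]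
    have h := hq 2 x
    rw [h2, hq0] at h
    have h4 : ((2 : ℤ) ^ 2 : ℤ) • q x = q x + q x + q x + q x := by
      norm_num
      abel
    rw [h4] at h
    exact h.symm
  -- the 2-torsion subgroup
  let H : AddSubgroup G :=
    { carrier := {x : G | x + x = 0}
      zero_mem' := by simp
      add_mem' := by
        intro a b ha hb
        simp only [Set.mem_setOf_eq] at *
        calc a + b + (a + b) = (a + a) + (b + b) := by abel
          _ = 0 := by rw [ha, hb, add_zero]
      neg_mem' := by
        intro a ha
        simp only [Set.mem_setOf_eq] at *
        calc -a + -a = -(a + a) := by abel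
          _ = 0 := by rw [ha, neg_zero] }
  have htors : ∀ v : ↥H, v + v = 0 := fun v => Subtype.ext v.2
  haveI : Fact (Nat.Prime 2) := ⟨Nat.prime_two⟩
  letI : Module (ZMod 2) ↥H := AddCommGroup.zmodModule (n := 2) (by
    intro x
    rw [two_nsmul, htors x])
  -- the even part as a submodule
  let E : Submodule (ZMod 2) ↥H :=
    { carrier := {v : ↥H | ∃ m : ℤ, q v.val = ((m : ℚ) : AddCircle (2 : ℚ))}
      zero_mem' := ⟨0, by simpa using hq0⟩
      add_mem' := by
        rintro v w ⟨m₁, h1⟩ ⟨m₂, h2⟩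
        obtain ⟨m₃, h3⟩ := hB v.val w.val v.2
        refine ⟨m₁ + m₂ + m₃, ?_⟩
        have hval : q ((v + w : ↥H) : G) = q (v.val + w.val) := rfl
        have hsum : q (v.val + w.val)
            = q v.val + q w.val + (q (v.val + w.val) - q v.val - q w.val) := by abel
        rw [hval, hsum, h3, h1, h2]
        exact congrArg (fun r : ℚ => (r : AddCircle (2 : ℚ))) (by push_cast; ring)
      smul_mem' := by
        intro c v hv
        rcases zmod2cases c with rfl | rfl
        · rw [zero_smul]
          exact ⟨0, by simpa using hq0⟩
        · rw [one_smul]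
          exact hv }
  have hEmem : ∀ v : ↥H, v ∈ E ↔ ∃ m : ℤ, q v.val = ((m : ℚ) : AddCircle (2 : ℚ)) :=
    fun v => Iff.rfl
  -- an element not in E has strictly half-integer value
  have hoddval : ∀ v : ↥H, v ∉ E →
      ∃ a : ℤ, q v.val = (((2 * a + 1 : ℤ) : ℚ) / 2 : ℚ) := by
    intro v hv
    obtain ⟨a, ha⟩ := hhalf v.val v.2
    rcases Int.even_or_odd a with ⟨k, hk⟩ | ⟨k, hk⟩
    · exfalso
      apply hv
      refine ⟨k, ?_⟩
      rw [ha, hk]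
      exact congrArg (fun r : ℚ => (r : AddCircle (2 : ℚ))) (by push_cast; ring)
    · refine ⟨k, ?_⟩
      rw [ha, hk]
  -- sum of two odd elements is even
  have hcomb : ∀ v w : ↥H, v ∉ E → w ∉ E → v + w ∈ E := by
    intro v w hv hw
    obtain ⟨a, ha⟩ := hoddval v hv
    obtain ⟨b, hb⟩ := hoddval w hw
    obtain ⟨m₃, h3⟩ := hB v.val w.val v.2
    refine ⟨a + b + 1 + m₃, ?_⟩
    have hval : q ((v + w : ↥H) : G) = q (v.val + w.val) := rfl
    have hsum : q (v.val + w.val)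
        = q v.val + q w.val + (q (v.val + w.val) - q v.val - q w.val) := by abel
    rw [hval, hsum, h3, ha, hb]
    exact congrArg (fun r : ℚ => (r : AddCircle (2 : ℚ))) (by push_cast; ring)
  -- counting
  set d := Module.finrank (ZMod 2) ↥H with hd
  haveI : Fintype ↥H := Fintype.ofFinite _
  have hcardH : Nat.card ↥H = 2 ^ d := by
    rw [Nat.card_eq_fintype_card, Module.card_eq_pow_finrank (K := ZMod 2) (V := ↥H), ZMod.card]
  have hellG : ell2 G = d := by
    have hc : Nat.card {x : G // x + x = 0} = 2 ^ d := hcardH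
    rw [ell2, hc, Nat.Prime.factorization_pow Nat.prime_two, Finsupp.single_eq_same]
  have hell_sub : ∀ K : AddSubgroup G, (∀ x ∈ K, x + x = 0) →
      ell2 ↥K = (Nat.card ↥K).factorization 2 := by
    intro K hK
    have e : {x : ↥K // x + x = 0} ≃ ↥K :=
      Equiv.subtypeUnivEquiv (fun x => Subtype.ext (hK x.1 x.2))
    rw [ell2, Nat.card_congr e]
  have hd1 : 1 ≤ d := hellG ▸ hl
  -- find a submodule of rank d - 1 inside E
  obtain ⟨W, hWle, hWrank⟩ : ∃ W : Submodule (ZMod 2) ↥H,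
      W ≤ E ∧ Module.finrank (ZMod 2) ↥W = d - 1 := by
    by_cases hE : ∀ v : ↥H, v ∈ E
    · have : Nontrivial ↥H := by
        rw [← Module.finrank_pos_iff (R := ZMod 2)]
        omega
      obtain ⟨v, hv⟩ := exists_ne (0 : ↥H)
      obtain ⟨W, hW⟩ := Submodule.exists_isCompl (Submodule.span (ZMod 2) {v})
      refine ⟨W, fun x _ => hE x, ?_⟩
      have h1 := Submodule.finrank_add_eq_of_isCompl hW
      rw [finrank_span_singleton hv] at h1
      omega
    · push_neg at hE
      obtain ⟨v, hv⟩ := hE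
      have hv0 : v ≠ 0 := by
        rintro rfl
        exact hv ⟨0, by simpa using hq0⟩
      refine ⟨E, le_refl _, ?_⟩
      have hsup : E ⊔ Submodule.span (ZMod 2) {v} = ⊤ := by
        rw [eq_top_iff]
        intro w _
        by_cases hw : w ∈ E
        · exact Submodule.mem_sup_left hw
        · have h1 : w + v ∈ E := hcomb w v hw hv
          have h2 : w = (w + v) + v := by rw [add_assoc, htors v, add_zero]
          rw [h2]
          exact add_mem (Submodule.mem_sup_left h1)
            (Submodule.mem_sup_right (Submodule.mem_span_singleton_self v))
      have hinf : E ⊓ Submodule.span (ZMod 2) {v} = ⊥ := by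
        rw [eq_bot_iff]
        intro w hw
        rw [Submodule.mem_inf, Submodule.mem_span_singleton] at hw
        obtain ⟨hw1, c, rfl⟩ := hw
        rcases zmod2cases c with rfl | rfl
        · rw [zero_smul]; exact Submodule.zero_mem ⊥
        · rw [one_smul] at hw1; exact absurd hw1 hv
      have h2 := Submodule.finrank_sup_add_finrank_inf_eq E (Submodule.span (ZMod 2) {v})
      rw [hsup, hinf, finrank_top, finrank_bot, finrank_span_singleton hv0] at h2
      omega
  -- conclude
  refine ⟨(W.toAddSubgroup).map H.subtype, ?_, ?_, ?_⟩
  · intro x hx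
    obtain ⟨y, -, rfl⟩ := AddSubgroup.mem_map.mp hx
    exact y.2
  · have htorsmap : ∀ x ∈ (W.toAddSubgroup).map H.subtype, x + x = 0 := by
      intro x hx
      obtain ⟨y, -, rfl⟩ := AddSubgroup.mem_map.mp hx
      exact y.2
    rw [hell_sub _ htorsmap]
    have hcW : Nat.card ↥((W.toAddSubgroup).map H.subtype) = Nat.card ↥W :=
      (Nat.card_congr (AddSubgroup.equivMapOfInjective W.toAddSubgroup H.subtype
        H.subtype_injective).toEquiv).symm
    haveI : Fintype ↥W := Fintype.ofFinite _
    have hcW2 : Nat.card ↥W = 2 ^ (d - 1) := by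
      rw [Nat.card_eq_fintype_card, Module.card_eq_pow_finrank (K := ZMod 2) (V := ↥W), ZMod.card,
        hWrank]
    rw [hcW, hcW2, Nat.Prime.factorization_pow Nat.prime_two, Finsupp.single_eq_same, hellG]
  · intro x hx
    obtain ⟨y, hyW, rfl⟩ := AddSubgroup.mem_map.mp hx
    exact hWle hyW
end

section
/- An integral lattice L of rank n satisfies ℓ₂(L^∨/L) = n if and only if there exists an integral lattice L' with L = L'(2). Moreover, in this case L' is even if and only if the discriminant form of L restricted to 2-torsion is even. -/
open Matrix

private lemma aux_mulVec_inj {n : ℕ} (G : Matrix (Fin n) (Fin n) ℤ) (hdet : G.det ≠ 0) :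
    Function.Injective G.mulVec := by
  intro a b hab
  have h : ∀ v : Fin n → ℤ, G.adjugate *ᵥ (G *ᵥ v) = G.det • v := fun v => by
    rw [mulVec_mulVec, adjugate_mul, smul_mulVec, one_mulVec]
  have h2 := congrArg (G.adjugate.mulVec) hab
  rw [h, h] at h2
  funext i
  have h3 := congrFun h2 i
  simp only [Pi.smul_apply, smul_eq_mul] at h3
  exact mul_left_cancel₀ hdet h3

private lemma aux_castlift (v : ZMod 2) : (((v.val : ℤ)) : ZMod 2) = v := by
  push_cast [ZMod.natCast_val]
  simp [ZMod.intCast_cast]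

private lemma aux_even_quad {n : ℕ} (A : Matrix (Fin n) (Fin n) ℤ) (hsymm : A.IsSymm)
    (hdiag : ∀ i, 2 ∣ A i i) (v : Fin n → ℤ) : 2 ∣ v ⬝ᵥ A *ᵥ v := by
  have key : ((v ⬝ᵥ A *ᵥ v : ℤ) : ZMod 2) = 0 := by
    have expand : (v ⬝ᵥ A *ᵥ v : ℤ) = ∑ p : Fin n × Fin n, v p.1 * A p.1 p.2 * v p.2 := by
      simp [dotProduct, mulVec, Finset.mul_sum, Fintype.sum_prod_type, mul_assoc]
    rw [expand]
    push_cast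
    refine Finset.sum_involution (fun p _ => p.swap) ?_ ?_ (fun p hp => Finset.mem_univ _)
      (fun p _ => Prod.swap_swap p)
    · intro p _
      have : A p.2 p.1 = A p.1 p.2 := hsymm.apply p.1 p.2
      rw [Prod.fst_swap, Prod.snd_swap, this]
      ring_nf
      rw [show (2 : ZMod 2) = 0 from rfl, mul_zero]
    · intro p _ hf hswap
      apply hf
      have h12 : p.1 = p.2 := by
        have := congrArg Prod.fst hswap
        simpa using this.symm
      have : ((A p.1 p.2 : ℤ) : ZMod 2) = 0 := by
        rw [← h12] at *
        rw [ZMod.intCast_zmod_eq_zero_iff_dvd]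
        exact_mod_cast hdiag p.1
      rw [this]
      ring
  have := (ZMod.intCast_zmod_eq_zero_iff_dvd _ 2).mp key
  exact_mod_cast this

private lemma aux_card {n : ℕ} (G : Matrix (Fin n) (Fin n) ℤ) (hdet : G.det ≠ 0) :
    Nat.card {x : (Fin n → ℤ) ⧸ LinearMap.range (Matrix.toLin' G) // x + x = 0}
      = Nat.card (LinearMap.ker (Matrix.toLin' (G.map (Int.cast : ℤ → ZMod 2)))) := by
  set lift : (Fin n → ZMod 2) → (Fin n → ℤ) := fun v i => ((v i).val : ℤ) with hlift
  have hcastlift : ∀ (v : Fin n → ZMod 2) i, ((lift v i : ℤ) : ZMod 2) = v i :=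
    fun v i => aux_castlift (v i)
  set half : (Fin n → ℤ) → (Fin n → ℤ) := fun w i => w i / 2 with hhalf
  have hhalf2 : ∀ w : Fin n → ℤ, (∀ i, 2 ∣ w i) → (2:ℤ) • half w = w := by
    intro w hw
    funext i
    simpa using Int.mul_ediv_cancel' (hw i)
  have hdvd : ∀ v : Fin n → ZMod 2, (G.map (Int.cast : ℤ → ZMod 2)) *ᵥ v = 0 →
      ∀ i, 2 ∣ (G *ᵥ lift v) i := by
    intro v hv i
    have : (((G *ᵥ lift v) i : ℤ) : ZMod 2) = 0 := by
      have hcomp : ⇑(Int.castRingHom (ZMod 2)) ∘ lift v = v := funext (hcastlift v)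
      have h := RingHom.map_mulVec (Int.castRingHom (ZMod 2)) G (lift v) i
      rw [hcomp] at h
      simp only [Int.coe_castRingHom] at h
      rw [show G.map (Int.cast : ℤ → ZMod 2) *ᵥ v = 0 from hv] at h
      simpa using h
    exact_mod_cast (ZMod.intCast_zmod_eq_zero_iff_dvd _ 2).mp this
  -- define the map
  have hker : ∀ x : LinearMap.ker (Matrix.toLin' (G.map (Int.cast : ℤ → ZMod 2))),
      (G.map (Int.cast : ℤ → ZMod 2)) *ᵥ (x : Fin n → ZMod 2) = 0 := by
    intro x
    have := x.2
    rwa [LinearMap.mem_ker, Matrix.toLin'_apply] at this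
  set f : LinearMap.ker (Matrix.toLin' (G.map (Int.cast : ℤ → ZMod 2))) →
      {x : (Fin n → ℤ) ⧸ LinearMap.range (Matrix.toLin' G) // x + x = 0} :=
    fun x => ⟨Submodule.Quotient.mk (half (G *ᵥ lift x)), by
      rw [← Submodule.Quotient.mk_add, Submodule.Quotient.mk_eq_zero]
      refine ⟨lift x, ?_⟩
      rw [Matrix.toLin'_apply]
      rw [← two_smul ℤ (half (G *ᵥ lift x)), hhalf2 _ (hdvd _ (hker x))]⟩ with hf
  refine (Nat.card_eq_of_bijective f ⟨?_, ?_⟩).symm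
  · -- injective
    rintro ⟨v, hv⟩ ⟨w, hw⟩ hvw
    have hv' := hdvd v (by simpa [Matrix.toLin'_apply] using hv)
    have hw' := hdvd w (by simpa [Matrix.toLin'_apply] using hw)
    have h1 : Submodule.Quotient.mk (p := LinearMap.range (Matrix.toLin' G))
        (half (G *ᵥ lift v)) = Submodule.Quotient.mk (half (G *ᵥ lift w)) := by
      have := congrArg Subtype.val hvw
      simpa [hf] using this
    rw [Submodule.Quotient.eq] at h1
    obtain ⟨z, hz⟩ := h1
    rw [Matrix.toLin'_apply] at hz
    have h2 : G *ᵥ (lift w + (2:ℤ) • z) = G *ᵥ lift v := by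
      have := congrArg (fun u => (2 : ℤ) • u) hz
      simp only [smul_sub] at this
      rw [hhalf2 _ hv', hhalf2 _ hw'] at this
      rw [mulVec_add]
      have h2z : G *ᵥ ((2:ℤ) • z) = (2:ℤ) • (G *ᵥ z) := mulVec_smul G 2 z
      rw [h2z, this]
      ring
    have h3 := aux_mulVec_inj G hdet h2
    apply Subtype.ext
    funext i
    have := congrFun h3 i
    have hcast := congrArg (fun t : ℤ => (t : ZMod 2)) this
    simp only [Pi.add_apply, Pi.smul_apply, smul_eq_mul] at hcast
    push_cast at hcast
    rw [hcastlift, hcastlift, show (2 : ZMod 2) = 0 from rfl] at hcast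
    simpa using hcast.symm
  · -- surjective
    rintro ⟨t, ht⟩
    obtain ⟨x, hx⟩ := Submodule.Quotient.mk_surjective _ t
    have hxx : x + x ∈ LinearMap.range (Matrix.toLin' G) := by
      rw [← Submodule.Quotient.mk_eq_zero, Submodule.Quotient.mk_add, hx]
      exact ht
    obtain ⟨y, hy⟩ := hxx
    rw [Matrix.toLin'_apply] at hy
    set v : Fin n → ZMod 2 := fun i => ((y i : ZMod 2)) with hv
    have hvker : Matrix.toLin' (G.map (Int.cast : ℤ → ZMod 2)) v = 0 := by
      rw [Matrix.toLin'_apply]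
      funext i
      have : (((G *ᵥ y) i : ℤ) : ZMod 2) = ((G.map (Int.cast : ℤ → ZMod 2)) *ᵥ v) i := by
        have h := RingHom.map_mulVec (Int.castRingHom (ZMod 2)) G y i
        rw [hv]
        simpa [Function.comp_def] using h
      rw [← this, hy]
      have : (x + x) i = 2 * x i := by simp [two_mul]
      rw [this]
      push_cast
      rw [show (2 : ZMod 2) = 0 from rfl, zero_mul]
      simp
    refine ⟨⟨v, LinearMap.mem_ker.mpr hvker⟩, ?_⟩
    apply Subtype.ext
    simp only [hf]
    rw [hx.symm] at *
    rw [Submodule.Quotient.eq]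
    -- lift v - y is divisible by 2
    have hdiff : ∀ i, 2 ∣ (lift v i - y i) := by
      intro i
      have : ((lift v i - y i : ℤ) : ZMod 2) = 0 := by
        push_cast
        rw [hcastlift]
        simp [hv]
      exact_mod_cast (ZMod.intCast_zmod_eq_zero_iff_dvd _ 2).mp this
    set z : Fin n → ℤ := half (fun i => lift v i - y i) with hz
    have hz2 : lift v = y + (2:ℤ) • z := by
      have := hhalf2 _ hdiff
      funext i
      have := congrFun this i
      simp only [hz, Pi.add_apply, Pi.smul_apply, smul_eq_mul] at this ⊢
      omega
    have hveq : (2:ℤ) • half (G *ᵥ lift v) = (2:ℤ) • (x + G *ᵥ z) := by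
      rw [hhalf2 _ (hdvd v (by rwa [Matrix.toLin'_apply] at hvker)), hz2, mulVec_add]
      have h2z : G *ᵥ ((2:ℤ) • z) = (2:ℤ) • (G *ᵥ z) := mulVec_smul G 2 z
      rw [h2z, hy]
      funext i
      simp only [Pi.add_apply, Pi.smul_apply, smul_eq_mul]
      ring
    have hcancel : half (G *ᵥ lift v) = x + G *ᵥ z := by
      funext i
      have := congrFun hveq i
      simp only [Pi.smul_apply, smul_eq_mul] at this
      omega
    rw [hcancel]
    exact ⟨z, by rw [Matrix.toLin'_apply]; ring⟩

/-- An integral lattice `L` of rank `n` (with Gram matrix `G`) satisfies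
`ℓ₂(L^∨/L) = n` if and only if `L = L'(2)` for some integral lattice `L'` (i.e. `G = 2G'`);
and in that case `L'` is even iff the discriminant form of `L` restricted to the
2-torsion of `L^∨/L` takes only integral (even) values in `ℚ/2ℤ`. -/
theorem stmt11 (n : ℕ) (G : Matrix (Fin n) (Fin n) ℤ) (hsymm : G.IsSymm)
    (hdet : G.det ≠ 0) :
    (ell2 ((Fin n → ℤ) ⧸ LinearMap.range (Matrix.toLin' G)) = n ↔
      ∃ G' : Matrix (Fin n) (Fin n) ℤ, G = 2 • G') ∧
    (∀ G' : Matrix (Fin n) (Fin n) ℤ, G = 2 • G' →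
      ((∀ i, 2 ∣ G' i i) ↔
        ∀ x : Fin n → ℚ,
          (∀ y : Fin n → ℤ, ∃ m : ℤ,
            dotProduct x ((G.map fun z : ℤ => (z : ℚ)).mulVec fun i => (y i : ℚ)) = m) →
          (∀ i, ∃ z : ℤ, 2 * x i = z) →
          ∃ m : ℤ, dotProduct x ((G.map fun z : ℤ => (z : ℚ)).mulVec x) = m)) := by
  constructor
  · set K := LinearMap.ker (Matrix.toLin' (G.map (Int.cast : ℤ → ZMod 2))) with hK
    have hcard : Nat.card {x : (Fin n → ℤ) ⧸ LinearMap.range (Matrix.toLin' G) // x + x = 0}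
        = 2 ^ Module.finrank (ZMod 2) K := by
      rw [aux_card G hdet]
      haveI : Fintype K := Fintype.ofFinite _
      rw [Nat.card_eq_fintype_card, Module.card_eq_pow_finrank (K := ZMod 2), ZMod.card]
    have hell : ell2 ((Fin n → ℤ) ⧸ LinearMap.range (Matrix.toLin' G))
        = Module.finrank (ZMod 2) K := by
      rw [ell2, hcard, Nat.Prime.factorization_pow Nat.prime_two]
      simp
    rw [hell]
    constructor
    · intro hd
      have htop : K = ⊤ := Submodule.eq_top_of_finrank_eq (by rw [hd, Module.finrank_fin_fun])
      have hzero : G.map (Int.cast : ℤ → ZMod 2) = 0 := by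
        have h1 : Matrix.toLin' (G.map (Int.cast : ℤ → ZMod 2)) = 0 := LinearMap.ker_eq_top.mp htop
        exact Matrix.toLin'.injective (by simpa using h1)
      refine ⟨G.map (· / 2), ?_⟩
      have hG2 : ∀ A : Matrix (Fin n) (Fin n) ℤ, (2 • A : Matrix (Fin n) (Fin n) ℤ)
          = (2:ℤ) • A := fun A => by rw [← Nat.cast_smul_eq_nsmul ℤ]; norm_num
      rw [hG2]
      ext i j
      have h0 : ((G i j : ℤ) : ZMod 2) = 0 := by
        have := congrFun (congrFun hzero i) j
        simpa [Matrix.map_apply] using this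
      have hdv : (2:ℤ) ∣ G i j := by exact_mod_cast (ZMod.intCast_zmod_eq_zero_iff_dvd _ 2).mp h0
      simp only [Matrix.smul_apply, Matrix.map_apply, smul_eq_mul]
      exact (Int.mul_ediv_cancel' hdv).symm
    · rintro ⟨G', rfl⟩
      have hG2 : (2 • G' : Matrix (Fin n) (Fin n) ℤ) = (2:ℤ) • G' := by
        rw [← Nat.cast_smul_eq_nsmul ℤ]; norm_num
      have htop : K = ⊤ := by
        rw [hK, LinearMap.ker_eq_top]
        have hzero : ((2 • G' : Matrix (Fin n) (Fin n) ℤ)).map (Int.cast : ℤ → ZMod 2) = 0 := by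
          rw [hG2]
          ext i j
          simp only [Matrix.map_apply, Matrix.smul_apply, smul_eq_mul, Matrix.zero_apply]
          push_cast
          rw [show (2 : ZMod 2) = 0 from rfl, zero_mul]
        rw [hzero]
        exact map_zero _
      rw [htop, finrank_top, Module.finrank_fin_fun]
  · rintro G' rfl
    have hG2 : (2 • G' : Matrix (Fin n) (Fin n) ℤ) = (2:ℤ) • G' := by
      rw [← Nat.cast_smul_eq_nsmul ℤ]; norm_num
    rw [hG2] at hsymm ⊢
    have hsymm' : G'.IsSymm := by
      rw [Matrix.IsSymm] at hsymm ⊢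
      ext i j
      have := congrFun (congrFun hsymm i) j
      simp only [Matrix.transpose_apply, Matrix.smul_apply, smul_eq_mul] at this ⊢
      omega
    have hmap : (((2:ℤ) • G' : Matrix (Fin n) (Fin n) ℤ)).map (fun t : ℤ => (t : ℚ))
        = (2:ℚ) • (G'.map fun t : ℤ => (t : ℚ)) := by
      ext i j
      simp only [Matrix.map_apply, Matrix.smul_apply, smul_eq_mul]
      push_cast
      ring
    rw [hmap]
    constructor
    · intro hdiag x hint hx2
      choose z hz using hx2
      obtain ⟨w, hw⟩ := aux_even_quad G' hsymm' hdiag z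
      refine ⟨w, ?_⟩
      have hcast : ((dotProduct z (G'.mulVec z) : ℤ) : ℚ)
          = dotProduct (fun i => ((z i : ℤ) : ℚ))
              ((G'.map fun t : ℤ => (t : ℚ)).mulVec fun i => ((z i : ℤ) : ℚ)) := by
        have h1 := RingHom.map_dotProduct (Int.castRingHom ℚ) z (G'.mulVec z)
        have h2 : ⇑(Int.castRingHom ℚ) ∘ (G'.mulVec z)
            = (G'.map ⇑(Int.castRingHom ℚ)).mulVec (⇑(Int.castRingHom ℚ) ∘ z) :=
          funext fun i => RingHom.map_mulVec _ _ _ i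
        rw [h2] at h1
        simpa [Function.comp_def] using h1
      have hxz : (fun i => ((z i : ℤ) : ℚ)) = (2:ℚ) • x := by
        funext i
        simp only [Pi.smul_apply, smul_eq_mul]
        exact (hz i).symm
      rw [hxz, smul_dotProduct, mulVec_smul, dotProduct_smul, hw] at hcast
      push_cast at hcast
      rw [smul_mulVec, dotProduct_smul]
      simp only [smul_eq_mul] at hcast ⊢
      linarith
    · intro h i
      set x : Fin n → ℚ := fun j => if j = i then (1/2 : ℚ) else 0 with hx
      have hcond1 : ∀ y : Fin n → ℤ, ∃ m : ℤ,
          dotProduct x (((2:ℚ) • (G'.map fun t : ℤ => (t : ℚ))).mulVec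
            fun i => (y i : ℚ)) = m := by
        intro y
        refine ⟨(G'.mulVec y) i, ?_⟩
        simp only [hx, dotProduct, ite_mul, one_mul, zero_mul, Finset.sum_ite_eq',
          Finset.mem_univ, if_true, Matrix.mulVec, Matrix.map_apply, Matrix.smul_apply,
          smul_eq_mul]
        push_cast
        rw [Finset.mul_sum]
        exact Finset.sum_congr rfl fun j _ => by ring
      have hcond2 : ∀ j, ∃ zz : ℤ, 2 * x j = zz := by
        intro j
        refine ⟨if j = i then 1 else 0, ?_⟩
        simp only [hx]
        split <;> norm_num
      obtain ⟨m, hm⟩ := h x hcond1 hcond2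
      have hval : dotProduct x (((2:ℚ) • (G'.map fun t : ℤ => (t : ℚ))).mulVec x)
          = (G' i i : ℚ) / 2 := by
        simp only [hx, dotProduct, ite_mul, one_mul, zero_mul, Finset.sum_ite_eq',
          Finset.mem_univ, if_true, Matrix.mulVec, Matrix.map_apply, Matrix.smul_apply,
          smul_eq_mul, mul_ite, mul_zero]
        ring
      rw [hval] at hm
      have h2m : (G' i i : ℚ) = 2 * m := by linarith
      exact ⟨m, by exact_mod_cast h2m⟩
end

section
/- Let f: F → ℚ/2ℤ be a nondegenerate finite quadratic form with f ≅ n·u₁ and g: G → ℚ/2ℤ a nondegenerate finite quadratic form. Let H ⊆ F and K ⊆ G be subgroups with an isometry γ: (f|H) → (g|K), and let Γ = {(α, γ(α)) : α ∈ H} ⊆ F ⊕ G be its graph, Γ^⊥ its orthogonal complement in F ⊕ G with respect to f ⊕ (−g). Then ℓ₂(F) + ℓ₂(G) = ℓ₂(Γ^⊥/Γ) + 2 ℓ₂(H). -/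
/-- The hyperbolic finite quadratic form `u₁` on `(ℤ/2)²`, with values in `ℚ/2ℤ`. -/
noncomputable def q1 (x : ZMod 2 × ZMod 2) : AddCircle (2 : ℚ) :=
  (((x.1.val : ℚ) * (x.2.val : ℚ)) : ℚ)

/-- The orthogonal sum `n·u₁` of `n` copies of `u₁`. -/
noncomputable def qU (n : ℕ) (α : Fin n → ZMod 2 × ZMod 2) : AddCircle (2 : ℚ) :=
  ∑ i, q1 (α i)

/-- The bilinear form of `f ⊕ (−g)` built from the (bundled) bilinear forms of `f`, `g`. -/
noncomputable def sumForm {F G C : Type*} [AddCommGroup F] [AddCommGroup G]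
    [AddCommGroup C] (bf : F →+ F →+ C) (bg : G →+ G →+ C) :
    (F × G) →+ (F × G) →+ C :=
  AddMonoidHom.mk'
    (fun x => AddMonoidHom.mk' (fun y => bf x.1 y.1 - bg x.2 y.2)
      (fun y z => by
        simp only [Prod.fst_add, Prod.snd_add, map_add, AddMonoidHom.add_apply]
        abel))
    (fun x y => by
      ext z
      simp only [Prod.fst_add, Prod.snd_add, map_add, AddMonoidHom.add_apply,
        AddMonoidHom.mk'_apply]
      abel)

/-- The orthogonal complement of a subgroup with respect to a bilinear form. -/
def biperp {A C : Type*} [AddCommGroup A] [AddCommGroup C] (B : A →+ A →+ C)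
    (S : AddSubgroup A) : AddSubgroup A where
  carrier := {x | ∀ y ∈ S, B x y = 0}
  zero_mem' := by intro y _; simp
  add_mem' := by
    intro a b ha hb y hy
    simp [map_add, AddMonoidHom.add_apply, ha y hy, hb y hy]
  neg_mem' := by
    intro a ha y hy
    simp [map_neg, AddMonoidHom.neg_apply, ha y hy]

/-! ### Auxiliary material -/

lemma coe_eq_coe (r s : ℚ) (k : ℤ) (h : r - s = 2*k) :
    ((r : ℚ) : AddCircle (2:ℚ)) = (s:ℚ) := by
  rw [← sub_eq_zero]
  show ((r - s : ℚ) : AddCircle (2:ℚ)) = 0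
  rw [AddCircle.coe_eq_zero_iff]
  exact ⟨k, by rw [zsmul_eq_mul, h]; ring⟩

lemma zmod2_cases : ∀ c : ZMod 2, c = 0 ∨ c = 1 := by decide

lemma zmod2_add_self : ∀ a : ZMod 2, a + a = 0 := by decide

/-- The embedding of `ℤ/2` as the `2`-torsion of `ℚ/2ℤ`. -/
noncomputable def e : ZMod 2 →+ AddCircle (2:ℚ) :=
  AddMonoidHom.mk' (fun a => ((a.val : ℚ) : AddCircle (2:ℚ))) (by
    intro a b
    show ((((a+b : ZMod 2)).val : ℚ) : AddCircle (2:ℚ))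
        = ((((a : ZMod 2)).val : ℚ) : AddCircle (2:ℚ)) + (((b : ZMod 2).val : ℚ) : AddCircle (2:ℚ))
    have key : ∀ (u v w : ℚ) (k : ℤ), u - (v + w) = 2*k →
        ((u : ℚ) : AddCircle (2:ℚ)) = ((v : ℚ) : AddCircle (2:ℚ)) + ((w:ℚ) : AddCircle (2:ℚ)) :=
      fun u v w k h => coe_eq_coe u (v+w) k h
    rcases zmod2_cases a with rfl|rfl <;> rcases zmod2_cases b with rfl|rfl
    · exact key _ _ _ 0 (by norm_num)
    · exact key _ _ _ 0 (by norm_num)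
    · exact key _ _ _ 0 (by norm_num)
    · refine key _ _ _ (-1) ?_
      rw [show ((1:ZMod 2)+1) = 0 from rfl, ZMod.val_zero, ZMod.val_one]
      norm_num)

lemma e_zero_iff (c : ZMod 2) : e c = 0 ↔ c = 0 := by
  constructor
  · intro h
    rcases zmod2_cases c with rfl|rfl
    · rfl
    · exfalso
      have h1 : (((1:ZMod 2).val : ℚ) : AddCircle (2:ℚ)) = 0 := h
      rw [AddCircle.coe_eq_zero_iff] at h1
      obtain ⟨k, hk⟩ := h1
      rw [zsmul_eq_mul, ZMod.val_one] at hk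
      have h2 : ((k*2 : ℤ):ℚ) = 1 := by push_cast at hk ⊢; linarith
      have : (k*2 : ℤ) = 1 := by exact_mod_cast h2
      omega
  · rintro rfl; show (((0:ZMod 2).val : ℚ) : AddCircle (2:ℚ)) = 0; norm_num

lemma e_inj : Function.Injective e := by
  intro a b hab
  have h0 : e (a - b) = 0 := by rw [map_sub, hab, sub_self]
  have := (e_zero_iff _).1 h0
  rwa [sub_eq_zero] at this

lemma tors_range : ∀ y : AddCircle (2:ℚ), y + y = 0 → ∃ c : ZMod 2, e c = y := by
  intro y hy
  obtain ⟨r, rfl⟩ := QuotientAddGroup.mk_surjective y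
  have hy' : ((r + r : ℚ) : AddCircle (2:ℚ)) = 0 := hy
  rw [AddCircle.coe_eq_zero_iff] at hy'
  obtain ⟨k, hk⟩ := hy'
  rw [zsmul_eq_mul] at hk
  have hr : r = k := by linarith [hk]
  rcases Int.even_or_odd k with ⟨m, hm⟩ | ⟨m, hm⟩
  · refine ⟨0, ?_⟩
    show (((0:ZMod 2).val : ℚ) : AddCircle (2:ℚ)) = _
    rw [ZMod.val_zero]
    exact (coe_eq_coe r 0 m (by rw [hr, hm]; push_cast; ring)).symm
  · refine ⟨1, ?_⟩
    show (((1:ZMod 2).val : ℚ) : AddCircle (2:ℚ)) = _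
    rw [ZMod.val_one]
    exact (coe_eq_coe r 1 m (by rw [hr, hm]; push_cast; ring)).symm

lemma key2 (u v w z : ℚ) (k : ℤ) (h : u - v - w - z = 2*k) :
    ((u:ℚ) : AddCircle (2:ℚ)) - (v:ℚ) - (w:ℚ) = ((z:ℚ) : AddCircle (2:ℚ)) := by
  have : ((u - v - w : ℚ) : AddCircle (2:ℚ)) = ((z:ℚ) : AddCircle (2:ℚ)) :=
    coe_eq_coe _ _ k (by linarith)
  exact this

lemma q1_polar (a b : ZMod 2 × ZMod 2) :
    q1 (a + b) - q1 a - q1 b = e (a.1 * b.2 + a.2 * b.1) := by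
  obtain ⟨a1, a2⟩ := a
  obtain ⟨b1, b2⟩ := b
  show _ = ((((a1 * b2 + a2 * b1 : ZMod 2)).val : ℚ) : AddCircle (2:ℚ))
  rcases zmod2_cases a1 with rfl|rfl <;> rcases zmod2_cases a2 with rfl|rfl <;>
    rcases zmod2_cases b1 with rfl|rfl <;> rcases zmod2_cases b2 with rfl|rfl <;>
    simp only [q1, Prod.mk_add_mk,
      show (0:ZMod 2)+0 = 0 by decide, show (0:ZMod 2)+1 = 1 by decide,
      show (1:ZMod 2)+0 = 1 by decide, show (1:ZMod 2)+1 = 0 by decide,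
      show (0:ZMod 2)*0 = 0 by decide, show (0:ZMod 2)*1 = 0 by decide,
      show (1:ZMod 2)*0 = 0 by decide, show (1:ZMod 2)*1 = 1 by decide,
      ZMod.val_zero, ZMod.val_one] <;>
    norm_num <;>
    first
      | exact coe_eq_coe (-1) 1 (-1) (by norm_num)
      | exact coe_eq_coe (-1-1) 0 (-1) (by norm_num)

/-- The 2-torsion subgroup. -/
def torsion2 (A : Type*) [AddCommGroup A] : AddSubgroup A where
  carrier := {z | z + z = 0}
  zero_mem' := by simp
  add_mem' := by
    intro a b ha hb
    have ha' : a + a = 0 := ha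
    have hb' : b + b = 0 := hb
    show (a + b) + (a + b) = 0
    have : (a + b) + (a + b) = (a + a) + (b + b) := by abel
    rw [this, ha', hb', add_zero]
  neg_mem' := by
    intro a ha
    have ha' : a + a = 0 := ha
    show (-a) + (-a) = 0
    rw [← neg_add, ha', neg_zero]

lemma mem_torsion2 {A : Type*} [AddCommGroup A] (x : A) : x ∈ torsion2 A ↔ x + x = 0 :=
  Iff.rfl

lemma ell2_eq (A : Type*) [AddCommGroup A] :
    ell2 A = (Nat.card ↥(torsion2 A)).factorization 2 := rfl

/-- Counting along an additive homomorphism. -/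
lemma card_hom_decomp {A B : Type*} [AddCommGroup A] [AddCommGroup B] (f : A →+ B) :
    Nat.card A = Nat.card f.range * Nat.card f.ker := by
  rw [AddSubgroup.card_eq_card_quotient_mul_card_addSubgroup f.ker]
  congr 1
  exact Nat.card_congr (QuotientAddGroup.quotientKerEquivRange f).toEquiv

lemma v2_mul {a b : ℕ} (ha : a ≠ 0) (hb : b ≠ 0) :
    (a*b).factorization 2 = a.factorization 2 + b.factorization 2 := by
  rw [Nat.factorization_mul ha hb]
  simp

/-- The group of homomorphisms of a finite 2-elementary group into `ℚ/2ℤ` has the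
same cardinality as the group itself. -/
lemma card_hom_eq {M : Type*} [AddCommGroup M] [Finite M] (hM : ∀ x : M, x + x = 0) :
    Nat.card (M →+ AddCircle (2:ℚ)) = Nat.card M := by
  haveI : Fact (Nat.Prime 2) := ⟨Nat.prime_two⟩
  letI : Module (ZMod 2) M := AddCommGroup.zmodModule (n := 2)
    (by intro x; rw [two_nsmul]; exact hM x)
  -- bijection with the linear dual
  have hbij : Function.Bijective
      (fun ψ : M →ₗ[ZMod 2] ZMod 2 => e.comp ψ.toAddMonoidHom) := by
    constructor
    · intro ψ₁ ψ₂ h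
      ext x
      exact e_inj (DFunLike.congr_fun h x)
    · intro φ
      have tors : ∀ x : M, ∃ c : ZMod 2, e c = φ x := by
        intro x
        apply tors_range
        rw [← map_add, hM, map_zero]
      choose c0 hc0 using tors
      have c0add : ∀ a b : M, c0 (a+b) = c0 a + c0 b := by
        intro a b
        apply e_inj
        rw [map_add, hc0, hc0, hc0, map_add]
      refine ⟨((AddMonoidHom.mk' c0 c0add).toZModLinearMap 2), ?_⟩
      ext x
      exact hc0 x
  have e1 : Nat.card (M →+ AddCircle (2:ℚ)) = Nat.card (M →ₗ[ZMod 2] ZMod 2) :=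
    (Nat.card_congr (Equiv.ofBijective _ hbij)).symm
  rw [e1]
  -- now count the linear dual via a basis
  let b := Module.Basis.ofVectorSpace (ZMod 2) M
  haveI : Fintype (Module.Basis.ofVectorSpaceIndex (ZMod 2) M) := FiniteDimensional.fintypeBasisIndex b
  have e2 : Nat.card (M →ₗ[ZMod 2] ZMod 2)
      = Nat.card (Module.Basis.ofVectorSpaceIndex (ZMod 2) M → ZMod 2) :=
    (Nat.card_congr (b.constr (ZMod 2) (M' := ZMod 2)).toEquiv).symm
  have e3 : Nat.card M = Nat.card (Module.Basis.ofVectorSpaceIndex (ZMod 2) M → ZMod 2) :=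
    Nat.card_congr b.equivFun.toEquiv
  rw [e2, e3]
set_option maxHeartbeats 1000000 in
/-- The length identity `ℓ₂(F) + ℓ₂(G) = ℓ₂(Γ^⊥/Γ) + 2ℓ₂(H)` for the graph `Γ` of an
isometry `γ : f|H → g|K`, where `f ≅ n·u₁` and `g` is a nondegenerate finite quadratic
form; `Γ^⊥` is taken in `F ⊕ G` with respect to the bilinear form of `f ⊕ (−g)`. -/
theorem stmt19 {G : Type*} [AddCommGroup G] [Finite G] (n : ℕ)
    (g : G → AddCircle (2 : ℚ))
    (hg : ∀ (m : ℤ) (a : G), g (m • a) = (m ^ 2 : ℤ) • g a)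
    (bg : G →+ G →+ AddCircle (2 : ℚ))
    (hbg : ∀ x y, bg x y = g (x + y) - g x - g y)
    (hnd : ∀ a : G, (∀ b : G, bg a b = 0) → a = 0)
    (bf : (Fin n → ZMod 2 × ZMod 2) →+ (Fin n → ZMod 2 × ZMod 2) →+ AddCircle (2 : ℚ))
    (hbf : ∀ x y, bf x y = qU n (x + y) - qU n x - qU n y)
    (H : AddSubgroup (Fin n → ZMod 2 × ZMod 2)) (K : AddSubgroup G)
    (γ : ↥H ≃+ ↥K) (hγ : ∀ x : ↥H, g ↑(γ x) = qU n ↑x) :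
    ∀ (Γ : AddSubgroup ((Fin n → ZMod 2 × ZMod 2) × G)),
      Γ = ((H.subtype).prod ((K.subtype).comp γ.toAddMonoidHom)).range →
      ell2 (Fin n → ZMod 2 × ZMod 2) + ell2 G =
        ell2 (↥(biperp (sumForm bf bg) Γ) ⧸ Γ.addSubgroupOf (biperp (sumForm bf bg) Γ)) +
          2 * ell2 ↥H := by
  intro Γ hΓ
  classical
  haveI : Fact (Nat.Prime 2) := ⟨Nat.prime_two⟩
  -- notation
  set V := (Fin n → ZMod 2 × ZMod 2) with hV
  have Vchar : ∀ v : V, v + v = 0 := by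
    intro v; funext i
    show v i + v i = 0
    rw [Prod.ext_iff]
    exact ⟨zmod2_add_self _, zmod2_add_self _⟩
  set B := sumForm bf bg with hB
  have B_apply : ∀ x y : V × G, B x y = bf x.1 y.1 - bg x.2 y.2 := fun _ _ => rfl
  set ι := (H.subtype).prod ((K.subtype).comp γ.toAddMonoidHom) with hι
  have ι_apply : ∀ h : ↥H, ι h = ((h : V), ((γ h : ↥K) : G)) := fun _ => rfl
  have ι_inj : Function.Injective ι := by
    intro a b hab
    exact Subtype.ext (congrArg Prod.fst hab)
  have hΓ_mem : ∀ v, v ∈ Γ ↔ ∃ h : ↥H, ι h = v := by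
    intro v; rw [hΓ]; exact AddMonoidHom.mem_range
  have Γ_fst : ∀ v ∈ Γ, v.1 = 0 → v = 0 := by
    intro v hv h1
    obtain ⟨h, rfl⟩ := (hΓ_mem v).1 hv
    have hh : h = 0 := Subtype.ext h1
    rw [hh, map_zero]
  -- the polar formula for bf
  have bf_formula : ∀ x y : V, bf x y = e (∑ i, ((x i).1 * (y i).2 + (x i).2 * (y i).1)) := by
    intro x y
    rw [hbf, map_sum]
    unfold qU
    rw [← Finset.sum_sub_distrib, ← Finset.sum_sub_distrib]
    refine Finset.sum_congr rfl (fun i _ => ?_)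
    rw [show (x+y) i = x i + y i from rfl]
    exact q1_polar (x i) (y i)
  -- subgroups
  set P := biperp B Γ with hP
  set T := torsion2 (V × G) with hT
  set S := P ⊓ T with hS
  have ΓleP : Γ ≤ P := by
    intro v hv y hy
    obtain ⟨h, rfl⟩ := (hΓ_mem v).1 hv
    obtain ⟨h', rfl⟩ := (hΓ_mem y).1 hy
    have hKadd : ((γ h : ↥K) : G) + ((γ h' : ↥K) : G) = ((γ (h + h') : ↥K) : G) := by
      rw [AddEquiv.map_add]; rfl
    have hHadd : ((h : V) + (h' : V)) = ((h + h' : ↥H) : V) := rfl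
    have e2 : bg ((γ h : ↥K) : G) ((γ h' : ↥K) : G) = bf (h : V) (h' : V) := by
      rw [hbg, hbf, hKadd, hγ, hγ, hγ, hHadd]
    have e1 : B (ι h) (ι h')
        = bf (h : V) (h' : V) - bg ((γ h : ↥K) : G) ((γ h' : ↥K) : G) := rfl
    show B (ι h) (ι h') = 0
    rw [e1, e2, sub_self]
  have ΓleT : Γ ≤ T := by
    intro v hv
    obtain ⟨h, rfl⟩ := (hΓ_mem v).1 hv
    show ι h + ι h = 0
    rw [← map_add]
    have : h + h = 0 := Subtype.ext (Vchar (h : V))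
    rw [this, map_zero]
  have ΓleS : Γ ≤ S := le_inf ΓleP ΓleT
  -- the homomorphism θ
  set θ : ↥T →+ (↥H →+ AddCircle (2:ℚ)) :=
    AddMonoidHom.mk' (fun z => (B (z : V × G)).comp ι)
      (by
        intro a b
        ext h
        show B ((a : V × G) + (b : V × G)) (ι h) = _
        rw [map_add]
        rfl) with hθ
  have θ_apply : ∀ (z : ↥T) (h : ↥H), θ z h = B (z : V × G) (ι h) := fun _ _ => rfl
  have θker : θ.ker = S.addSubgroupOf T := by
    ext z
    simp only [AddMonoidHom.mem_ker, AddSubgroup.mem_addSubgroupOf, hS, AddSubgroup.mem_inf]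
    constructor
    · intro h0
      refine ⟨?_, z.2⟩
      intro y hy
      obtain ⟨h, rfl⟩ := (hΓ_mem y).1 hy
      exact DFunLike.congr_fun h0 h
    · rintro ⟨hp, -⟩
      ext h
      exact hp (ι h) ((hΓ_mem _).2 ⟨h, rfl⟩)
  -- surjectivity of θ
  have θsurj : Function.Surjective θ := by
    intro φ
    -- H as a ZMod 2 submodule
    let H' : Submodule (ZMod 2) V :=
      { carrier := H
        add_mem' := fun ha hb => H.add_mem ha hb
        zero_mem' := H.zero_mem
        smul_mem' := by
          intro c x hx
          rcases zmod2_cases c with rfl|rfl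
          · rw [zero_smul]; exact H.zero_mem
          · rw [one_smul]; exact hx }
    have tors : ∀ h : ↥H, ∃ c : ZMod 2, e c = φ h := by
      intro h
      apply tors_range
      rw [← map_add]
      have : h + h = 0 := Subtype.ext (Vchar (h : V))
      rw [this, map_zero]
    choose c0 hc0 using tors
    have c0add : ∀ a b : ↥H, c0 (a+b) = c0 a + c0 b := by
      intro a b
      apply e_inj
      rw [map_add, hc0, hc0, hc0, map_add]
    let ψA : ↥H' →+ ZMod 2 :=
      AddMonoidHom.mk' (fun x => c0 ⟨(x : V), x.2⟩)
        (by
          intro a b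
          rw [← c0add]
          congr 1)
    let ψ : ↥H' →ₗ[ZMod 2] ZMod 2 := ψA.toZModLinearMap 2
    obtain ⟨ψ', hψ'⟩ := LinearMap.exists_extend ψ
    set x : V := fun i =>
      (ψ' (Pi.single i (((0:ZMod 2),(1:ZMod 2))) : V), ψ' (Pi.single i (((1:ZMod 2),(0:ZMod 2))) : V)) with hx
    have hbfx : ∀ y : V, bf x y = e (ψ' y) := by
      intro y
      rw [bf_formula]
      congr 1
      have hpt : ∀ i, (x i).1 * (y i).2 + (x i).2 * (y i).1 = ψ' (Pi.single i (y i)) := by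
        intro i
        have h1 : Pi.single i (y i)
            = (y i).1 • (Pi.single i ((1:ZMod 2),(0:ZMod 2)) : V)
              + (y i).2 • (Pi.single i ((0:ZMod 2),(1:ZMod 2)) : V) := by
          rw [← Pi.single_smul, ← Pi.single_smul, ← Pi.single_add]
          congr 1
          rw [Prod.smul_mk, Prod.smul_mk, Prod.mk_add_mk]
          rw [smul_eq_mul, smul_eq_mul, smul_eq_mul, smul_eq_mul]
          rw [mul_one, mul_zero, mul_one, mul_zero, add_zero, zero_add]
        rw [h1, map_add, map_smul, map_smul, smul_eq_mul, smul_eq_mul]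
        ring
      rw [Finset.sum_congr rfl (fun i _ => hpt i), ← map_sum]
      congr 1
      exact Finset.univ_sum_single y
    refine ⟨⟨(x, 0), ?_⟩, ?_⟩
    · show ((x, (0:G)) : V × G) + (x, 0) = 0
      rw [Prod.mk_add_mk, Vchar x, add_zero]
      rfl
    · ext h
      rw [θ_apply]
      show bf x (h : V) - bg 0 ((γ h : ↥K) : G) = φ h
      rw [map_zero, AddMonoidHom.zero_apply, sub_zero, hbfx]
      have hu : ψ' (h : V) = ψA ⟨(h : V), h.2⟩ := LinearMap.congr_fun hψ' ⟨(h : V), h.2⟩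
      rw [hu]
      show e (c0 ⟨(h : V), h.2⟩) = φ h
      rw [hc0]
  -- first counting identity
  have hHtors : ∀ x : ↥H, x + x = 0 := fun x => Subtype.ext (Vchar (x : V))
  have c1 : Nat.card ↥T = Nat.card ↥H * Nat.card ↥S := by
    rw [card_hom_decomp θ]
    congr 1
    · rw [AddMonoidHom.range_eq_top.2 θsurj]
      rw [Nat.card_congr AddSubgroup.topEquiv.toEquiv]
      exact card_hom_eq hHtors
    · rw [θker]
      exact Nat.card_congr (AddSubgroup.addSubgroupOfEquivOfLe inf_le_right).toEquiv
  -- second counting identity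
  set Γ' := Γ.addSubgroupOf P with hΓ'
  set f₂ : ↥S →+ (↥P ⧸ Γ') :=
    (QuotientAddGroup.mk' Γ').comp (AddSubgroup.inclusion inf_le_left) with hf₂
  have f2ker : f₂.ker = Γ.addSubgroupOf S := by
    ext x
    simp only [AddMonoidHom.mem_ker, AddMonoidHom.comp_apply, AddSubgroup.mem_addSubgroupOf, hf₂]
    rw [QuotientAddGroup.mk'_apply, QuotientAddGroup.eq_zero_iff]
    rfl
  have f2range : f₂.range = torsion2 (↥P ⧸ Γ') := by
    ext q
    simp only [AddMonoidHom.mem_range, mem_torsion2]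
    constructor
    · rintro ⟨x, rfl⟩
      rw [← map_add]
      have hx : x + x = 0 := Subtype.ext ((AddSubgroup.mem_inf.1 x.2).2 : (x : V × G) + x = 0)
      rw [hx, map_zero]
    · intro hq
      obtain ⟨p, rfl⟩ := QuotientAddGroup.mk'_surjective Γ' q
      have hq' : ((p + p : ↥P) : ↥P ⧸ Γ') = 0 := hq
      have hmem : (p + p) ∈ Γ' := (QuotientAddGroup.eq_zero_iff (p + p)).1 hq'
      have hΓmem : ((p : V × G) + p) ∈ Γ := hmem
      have hzero : ((p : V × G) + p) = 0 := by
        refine Γ_fst _ hΓmem ?_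
        show (p : V × G).1 + (p : V × G).1 = 0
        exact Vchar _
      refine ⟨⟨(p : V × G), AddSubgroup.mem_inf.2 ⟨p.2, hzero⟩⟩, rfl⟩
  have cΓ : Nat.card ↥Γ = Nat.card ↥H := by
    rw [hΓ]
    exact (Nat.card_congr (AddMonoidHom.ofInjective ι_inj).toEquiv).symm
  have c2 : Nat.card ↥S = Nat.card ↥(torsion2 (↥P ⧸ Γ')) * Nat.card ↥H := by
    rw [card_hom_decomp f₂, f2range, f2ker]
    congr 1
    rw [Nat.card_congr (AddSubgroup.addSubgroupOfEquivOfLe ΓleS).toEquiv]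
    exact cΓ
  -- decomposition of the torsion of the product
  have cT : Nat.card ↥T = Nat.card ↥(torsion2 V) * Nat.card ↥(torsion2 G) := by
    rw [← Nat.card_prod]
    refine Nat.card_congr ?_
    refine ⟨fun z => (⟨(z : V × G).1, congrArg Prod.fst z.2⟩, ⟨(z : V × G).2, congrArg Prod.snd z.2⟩),
      fun ab => ⟨((ab.1 : V), (ab.2 : G)), ?_⟩, fun z => rfl, fun ab => rfl⟩
    show (((ab.1 : V), (ab.2 : G)) : V × G) + ((ab.1 : V), (ab.2 : G)) = 0
    rw [Prod.mk_add_mk, (ab.1.2 : (ab.1 : V) + ab.1 = 0), (ab.2.2 : (ab.2 : G) + ab.2 = 0)]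
    rfl
  -- lengths
  have eH : ell2 ↥H = (Nat.card ↥H).factorization 2 := by
    unfold ell2
    rw [Nat.card_congr (Equiv.subtypeUnivEquiv hHtors)]
  -- positivity
  haveI : Finite (↥P ⧸ Γ') := Quotient.finite _
  have hTpos : Nat.card ↥(torsion2 V) ≠ 0 := by
    haveI : Nonempty ↥(torsion2 V) := ⟨0⟩
    exact Nat.card_pos.ne'
  have hGpos : Nat.card ↥(torsion2 G) ≠ 0 := by
    haveI : Nonempty ↥(torsion2 G) := ⟨0⟩
    exact Nat.card_pos.ne'
  have hHpos : Nat.card ↥H ≠ 0 := by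
    haveI : Nonempty ↥H := ⟨0⟩
    exact Nat.card_pos.ne'
  have hQpos : Nat.card ↥(torsion2 (↥P ⧸ Γ')) ≠ 0 := by
    haveI : Nonempty ↥(torsion2 (↥P ⧸ Γ')) := ⟨0⟩
    exact Nat.card_pos.ne'
  -- final arithmetic
  have key : Nat.card ↥(torsion2 V) * Nat.card ↥(torsion2 G)
      = Nat.card ↥H * (Nat.card ↥(torsion2 (↥P ⧸ Γ')) * Nat.card ↥H) := by
    rw [← cT, c1, c2]
  have final :
      (Nat.card ↥(torsion2 V)).factorization 2 + (Nat.card ↥(torsion2 G)).factorization 2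
      = (Nat.card ↥(torsion2 (↥P ⧸ Γ'))).factorization 2
        + 2 * (Nat.card ↥H).factorization 2 := by
    have lhs := v2_mul hTpos hGpos
    have rhs := v2_mul hHpos (mul_ne_zero hQpos hHpos)
    have rhs2 := v2_mul hQpos hHpos
    rw [← lhs, key, rhs, rhs2]
    ring
  calc ell2 V + ell2 G
      = (Nat.card ↥(torsion2 V)).factorization 2
        + (Nat.card ↥(torsion2 G)).factorization 2 := by rw [ell2_eq, ell2_eq]
    _ = (Nat.card ↥(torsion2 (↥P ⧸ Γ'))).factorization 2
        + 2 * (Nat.card ↥H).factorization 2 := final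
    _ = ell2 (↥P ⧸ Γ') + 2 * ell2 ↥H := by rw [ell2_eq, eH]
end
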